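/- arXiv:2009.13260 — 4 statements merged into one kernel-verified Lean document; each statement's English description precedes it below -/
import Mathlib

section
/- Let A be a UTA all of whose atomic constraints in guards use the weak inequality ≤, let M be the maximum constant occurring in the guards of A, let L be the maximum absolute value of a constant occurring in the updates of A (0 if none), and let G be the smallest reduced G-map of A. Then G assigns an infinite set to some state if and only if there exist a state q and an atomic constraint φ ∈ G(q) whose constant c_φ satisfies c_φ > max(M, L) + 2·L·|Q|·|X|². -/
open Classical

/-- Comparison operator `◁ ∈ {<, ≤}`. -/
inductive Ineq where
  | lt
  | le

def Ineq.holds : Ineq → ℝ → ℝ → Prop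
  | .lt, a, b => a < b
  | .le, a, b => a ≤ b

/-- Atomic constraints over a set `X` of clocks. -/
inductive AC (X : Type) where
  | tt
  | ff
  | upper (x : X) (o : Ineq) (c : ℕ)              -- x ◁ c
  | lower (c : ℕ) (o : Ineq) (x : X)              -- c ◁ x
  | dUpper (x y : X) (o : Ineq) (c : ℕ)           -- x - y ◁ c
  | dLower (c : ℕ) (o : Ineq) (x y : X)           -- c ◁ x - y

/-- A valuation maps clocks to nonnegative reals. -/
abbrev Val (X : Type) := X → NNReal

def AC.sat {X : Type} (v : Val X) : AC X → Prop
  | .tt => True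
  | .ff => False
  | .upper x o c => o.holds (v x : ℝ) (c : ℝ)
  | .lower c o x => o.holds (c : ℝ) (v x : ℝ)
  | .dUpper x y o c => o.holds ((v x : ℝ) - (v y : ℝ)) (c : ℝ)
  | .dLower c o x y => o.holds (c : ℝ) ((v x : ℝ) - (v y : ℝ))

/-- A constraint (guard) is a finite conjunction of atomic constraints. -/
abbrev Guard (X : Type) := List (AC X)

def satG {X : Type} (v : Val X) (g : Guard X) : Prop := ∀ φ ∈ g, AC.sat v φ

/-- The valuation `v + δ`. -/
def delay {X : Type} (v : Val X) (δ : NNReal) : Val X := fun x => v x + δ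

/-- `v ⊑_G v'` for a set `G` of atomic constraints. -/
def simS {X : Type} (G : Set (AC X)) (v v' : Val X) : Prop :=
  ∀ δ : NNReal, ∀ φ ∈ G, AC.sat (delay v δ) φ → AC.sat (delay v' δ) φ

/-- `v ⊑_φ v'` for a single constraint `φ` (a conjunction of atomic constraints). -/
def simC {X : Type} (g : Guard X) (v v' : Val X) : Prop :=
  ∀ δ : NNReal, satG (delay v δ) g → satG (delay v' δ) g

/-- Right-hand side of an atomic update: `x := c` or `x := y + d`. -/
inductive Rhs (X : Type) where
  | const (c : ℕ)
  | clock (y : X) (d : ℤ)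

/-- An update assigns a right-hand side to every clock. -/
abbrev Update (X : Type) := X → Rhs X

def Rhs.eval {X : Type} (v : Val X) : Rhs X → ℝ
  | .const c => (c : ℝ)
  | .clock y d => (v y : ℝ) + (d : ℝ)

/-- `up(v) ≥ 0`. -/
def Update.nonneg {X : Type} (up : Update X) (v : Val X) : Prop :=
  ∀ x, 0 ≤ Rhs.eval v (up x)

/-- The valuation `up(v)` (meaningful when `up.nonneg v`). -/
noncomputable def Update.app {X : Type} (up : Update X) (v : Val X) : Val X :=
  fun x => Real.toNNReal (Rhs.eval v (up x))

/-- `up⁻¹(φ)` for an atomic constraint `φ`: simultaneous substitution of `up_x` for `x`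
rewritten to an equivalent atomic constraint (possibly ⊤ or ⊥). -/
noncomputable def upInvA {X : Type} (up : Update X) : AC X → AC X
  | .tt => .tt
  | .ff => .ff
  | .upper x o c =>
      match up x with
      | .const a => if o.holds (a : ℝ) (c : ℝ) then .tt else .ff
      | .clock y d => if (c : ℤ) - d < 0 then .ff else .upper y o ((c : ℤ) - d).toNat
  | .lower c o x =>
      match up x with
      | .const a => if o.holds (c : ℝ) (a : ℝ) then .tt else .ff
      | .clock y d => if (c : ℤ) - d < 0 then .tt else .lower ((c : ℤ) - d).toNat o y
  | .dUpper x y o c =>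
      match up x, up y with
      | .const a, .const b => if o.holds ((a : ℝ) - (b : ℝ)) (c : ℝ) then .tt else .ff
      | .const a, .clock z e =>
          if (a : ℤ) - e - (c : ℤ) < 0 then .tt
          else .lower ((a : ℤ) - e - (c : ℤ)).toNat o z
      | .clock z e, .const b =>
          if (c : ℤ) + (b : ℤ) - e < 0 then .ff
          else .upper z o ((c : ℤ) + (b : ℤ) - e).toNat
      | .clock z e, .clock w f =>
          if (c : ℤ) - e + f < 0 then .dLower (-((c : ℤ) - e + f)).toNat o w z
          else .dUpper z w o ((c : ℤ) - e + f).toNat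
  | .dLower c o x y =>
      match up x, up y with
      | .const a, .const b => if o.holds (c : ℝ) ((a : ℝ) - (b : ℝ)) then .tt else .ff
      | .const a, .clock z e =>
          if (a : ℤ) - e - (c : ℤ) < 0 then .ff
          else .upper z o ((a : ℤ) - e - (c : ℤ)).toNat
      | .clock z e, .const b =>
          if (c : ℤ) + (b : ℤ) - e < 0 then .tt
          else .lower ((c : ℤ) + (b : ℤ) - e).toNat o z
      | .clock z e, .clock w f =>
          if (c : ℤ) - e + f < 0 then .dUpper w z o (-((c : ℤ) - e + f)).toNat
          else .dLower ((c : ℤ) - e + f).toNat o z w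

/-- `up⁻¹` of a conjunction of atomic constraints. -/
noncomputable def upInvC {X : Type} (up : Update X) (g : Guard X) : Guard X :=
  g.map (upInvA up)

/-- The guard `g` contains an upper-bound constraint `x ◁₁ c` on clock `x`. -/
def hasUpperG {X : Type} (g : Guard X) (x : X) : Prop := ∃ o c, AC.upper x o c ∈ g

/-- The smallest constant of an upper-bound constraint on `x` in `g`. -/
noncomputable def minUpperG {X : Type} (g : Guard X) (x : X) : ℕ :=
  sInf {c | ∃ o, AC.upper x o c ∈ g}

/-- Condition of Case 3 of the table defining `wp`. -/
def case3G {X : Type} (g : Guard X) (x y : X) (d : ℕ) : Prop :=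
  (∃ o c, AC.upper x o c ∈ g ∧ c < d) ∨
  (∃ o c, AC.dUpper x y o c ∈ g ∧ c < d) ∨
  (∃ o e, AC.dLower e o x y ∈ g ∧ d < e)

/-- The pre `wp(φ, g, up)` of an atomic constraint under a guard-update pair. -/
noncomputable def wp {X : Type} (φ : AC X) (g : Guard X) (up : Update X) : AC X :=
  match upInvA up φ with
  | .upper x o d => if hasUpperG g x then .tt else .upper x o d
  | .lower d o x =>
      if hasUpperG g x ∧ minUpperG g x < d then .lower (minUpperG g x) .le x
      else .lower d o x
  | .dUpper x y o d => if case3G g x y d then .tt else .dUpper x y o d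
  | .dLower d o x y => if case3G g x y d then .tt else .dLower d o x y
  | ψ => ψ

/-- A transition of an updatable timed automaton. -/
structure UTrans (Q X : Type) where
  src : Q
  guard : Guard X
  update : Update X
  tgt : Q

/-- An updatable timed automaton (UTA). -/
structure UTA (Q X : Type) where
  init : Q
  trans : List (UTrans Q X)
  acc : Set Q

/-- (Non-reduced) G-map. -/
def IsGMap {Q X : Type} (A : UTA Q X) (G : Q → Set (AC X)) : Prop :=
  ∀ t ∈ A.trans,
    (∀ φ ∈ t.guard, φ ∈ G t.src) ∧
    (∀ x : X, upInvA t.update (AC.lower 0 .le x) ∈ G t.src) ∧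
    (∀ φ ∈ G t.tgt, upInvA t.update φ ∈ G t.src)

/-- Reduced G-map. -/
def IsRedGMap {Q X : Type} (A : UTA Q X) (G : Q → Set (AC X)) : Prop :=
  ∀ t ∈ A.trans,
    (∀ φ ∈ t.guard, φ ∈ G t.src) ∧
    (∀ x : X, wp (AC.lower 0 .le x) t.guard t.update ∈ G t.src) ∧
    (∀ φ ∈ G t.tgt, wp φ t.guard t.update ∈ G t.src)

/-- Pointwise intersection of all G-maps: the smallest G-map. -/
def minGMap {Q X : Type} (A : UTA Q X) : Q → Set (AC X) :=
  fun q => ⋂ G ∈ {G | IsGMap A G}, G q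

/-- Pointwise intersection of all reduced G-maps: the smallest reduced G-map. -/
def minRedGMap {Q X : Type} (A : UTA Q X) : Q → Set (AC X) :=
  fun q => ⋂ G ∈ {G | IsRedGMap A G}, G q

/-- Action transition `(q, v) →t (q', up(v))` of the UTA semantics. -/
def actionStep {Q X : Type} (A : UTA Q X) (t : UTrans Q X) (c c' : Q × Val X) : Prop :=
  t ∈ A.trans ∧ c.1 = t.src ∧ c'.1 = t.tgt ∧ satG c.2 t.guard ∧
  t.update.nonneg c.2 ∧ c'.2 = t.update.app c.2

/-- A simulation on the UTA semantics: a preorder relating only configurations with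
the same state, preserved by delays and actions. -/
def IsSimulation {Q X : Type} (A : UTA Q X)
    (R : (Q × Val X) → (Q × Val X) → Prop) : Prop :=
  (∀ p, R p p) ∧
  (∀ p₁ p₂ p₃, R p₁ p₂ → R p₂ p₃ → R p₁ p₃) ∧
  (∀ p p', R p p' → p.1 = p'.1) ∧
  (∀ q (v v' : Val X) (δ : NNReal), R (q, v) (q, v') → R (q, delay v δ) (q, delay v' δ)) ∧
  (∀ q (v v' : Val X) t p₁, R (q, v) (q, v') → actionStep A t (q, v) p₁ →
      ∃ v₁', actionStep A t (q, v') (p₁.1, v₁') ∧ R p₁ (p₁.1, v₁'))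

/-- A run of a UTA: alternating delays and actions from the initial configuration. -/
def IsRun {Q X : Type} (A : UTA Q X) (n : ℕ) (qs : ℕ → Q) (ds : ℕ → NNReal)
    (vs : ℕ → Val X) : Prop :=
  qs 0 = A.init ∧ (∀ x, vs 0 x = 0) ∧
  ∀ i, i < n → ∃ t, actionStep A t (qs i, delay (vs i) (ds i)) (qs (i + 1), vs (i + 1))

/-- Configurations occurring on some run of the UTA. -/
def ReachCfg {Q X : Type} (A : UTA Q X) (p : Q × Val X) : Prop :=
  ∃ n qs ds vs, IsRun A n qs ds vs ∧ ∃ δ : NNReal, p.1 = qs n ∧ p.2 = delay (vs n) δ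

/-- Timed automaton with subtraction: every atomic update is `x := 0` or `x := x - c`. -/
def IsSubtractionTA {Q X : Type} (A : UTA Q X) : Prop :=
  ∀ t ∈ A.trans, ∀ x : X,
    t.update x = Rhs.const 0 ∨ ∃ c : ℕ, t.update x = Rhs.clock x (-(c : ℤ))

/-- Timed automaton with bounded subtraction with bounds `M`. -/
def IsBoundedSub {Q X : Type} (A : UTA Q X) (M : X → ℕ) : Prop :=
  IsSubtractionTA A ∧
  ∀ q v, ReachCfg A (q, v) → ∀ t ∈ A.trans, t.src = q → satG v t.guard →
    ∀ (x : X) (c : ℕ), 0 < c → t.update x = Rhs.clock x (-(c : ℤ)) → (v x : ℝ) ≤ (M x : ℝ)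

/-- Timed automaton with syntactically bounded subtraction. -/
def IsSynBoundedSub {Q X : Type} (A : UTA Q X) : Prop :=
  IsSubtractionTA A ∧
  ∀ t ∈ A.trans, ∀ (x : X) (c : ℕ), 0 < c → t.update x = Rhs.clock x (-(c : ℤ)) →
    ∃ o c', AC.upper x o c' ∈ t.guard

/-- The constant of an atomic constraint. -/
def AC.cst {X : Type} : AC X → ℕ
  | .tt => 0
  | .ff => 0
  | .upper _ _ c => c
  | .lower c _ _ => c
  | .dUpper _ _ _ c => c
  | .dLower c _ _ _ => c

/-- The constant occurring in the right-hand side of an atomic update. -/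
def Rhs.cst {X : Type} : Rhs X → ℕ
  | .const c => c
  | .clock _ d => d.natAbs

/-- Maximum constant occurring in the guards of a UTA. -/
def maxGuardConst {Q X : Type} (A : UTA Q X) : ℕ :=
  (A.trans.map fun t => (t.guard.map AC.cst).foldr max 0).foldr max 0

/-- Maximum absolute value of a constant occurring in the updates of a UTA. -/
noncomputable def maxUpdateConst {Q X : Type} [Fintype X] (A : UTA Q X) : ℕ :=
  (A.trans.map fun t => Finset.univ.sup fun x => Rhs.cst (t.update x)).foldr max 0

/-- `L(G)(x)`: maximum constant of a lower-bound constraint on `x` in `G` (⊥ = −∞ if none). -/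
noncomputable def Lb {X : Type} (G : Set (AC X)) (x : X) : WithBot ℕ∞ :=
  ⨆ c ∈ {c : ℕ | ∃ o, AC.lower c o x ∈ G}, ((c : ℕ∞) : WithBot ℕ∞)

/-- `U(G)(x)`: maximum constant of an upper-bound constraint on `x` in `G` (⊥ = −∞ if none). -/
noncomputable def Ub {X : Type} (G : Set (AC X)) (x : X) : WithBot ℕ∞ :=
  ⨆ c ∈ {c : ℕ | ∃ o, AC.upper x o c ∈ G}, ((c : ℕ∞) : WithBot ℕ∞)

def AC.isDiag {X : Type} : AC X → Prop
  | .dUpper _ _ _ _ => True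
  | .dLower _ _ _ _ => True
  | _ => False

/-- `G^d`: the diagonal constraints of `G`. -/
def diagOf {X : Type} (G : Set (AC X)) : Set (AC X) := {φ ∈ G | φ.isDiag}

def AC.isWeak {X : Type} : AC X → Prop
  | .upper _ o _ => o = .le
  | .lower _ o _ => o = .le
  | .dUpper _ _ o _ => o = .le
  | .dLower _ o _ _ => o = .le
  | _ => True

/-- All atomic constraints in guards of `A` use the weak inequality `≤`. -/
def weakGuards {Q X : Type} (A : UTA Q X) : Prop :=
  ∀ t ∈ A.trans, ∀ φ ∈ t.guard, φ.isWeak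

/-- A context: an atomic constraint with a hole for the constant. -/
inductive Ctx (X : Type) where
  | upper (x : X)      -- x ≤ ·
  | lower (x : X)      -- · ≤ x
  | dUpper (x y : X)   -- x - y ≤ ·
  | dLower (x y : X)   -- · ≤ x - y

def Ctx.fill {X : Type} : Ctx X → ℕ → AC X
  | .upper x, c => .upper x .le c
  | .lower x, c => .lower c .le x
  | .dUpper x y, c => .dUpper x y .le c
  | .dLower x y, c => .dLower c .le x y

/-- Propagation sequence `(q_i, ctx_i[c_i]) → ⋯ → (q_j, ctx_j[c_j])`. -/
def PropSeq {Q X : Type} (A : UTA Q X) (i j : ℕ) (qs : ℕ → Q) (ctxs : ℕ → Ctx X)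
    (cs : ℕ → ℕ) : Prop :=
  ∀ k, i ≤ k → k < j → ∃ t ∈ A.trans, t.src = qs (k + 1) ∧ t.tgt = qs k ∧
    (ctxs (k + 1)).fill (cs (k + 1)) = wp ((ctxs k).fill (cs k)) t.guard t.update

namespace Stmt14

variable {Q X : Type}

/-! ### Derivation relation and the smallest reduced G-map -/

inductive Der (A : UTA Q X) : Q → AC X → Prop where
  | guard {t : UTrans Q X} (ht : t ∈ A.trans) {φ : AC X} (hφ : φ ∈ t.guard) : Der A t.src φ
  | base {t : UTrans Q X} (ht : t ∈ A.trans) (x : X) :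
      Der A t.src (wp (.lower 0 .le x) t.guard t.update)
  | step {t : UTrans Q X} (ht : t ∈ A.trans) {φ : AC X} (h : Der A t.tgt φ) :
      Der A t.src (wp φ t.guard t.update)

lemma minRedGMap_eq (A : UTA Q X) : minRedGMap A = fun q => {φ | Der A q φ} := by
  have hred : IsRedGMap A (fun q => {φ | Der A q φ}) := by
    intro t ht
    exact ⟨fun φ hφ => Der.guard ht hφ, fun x => Der.base ht x, fun φ hφ => Der.step ht hφ⟩
  funext q; ext φ
  simp only [minRedGMap, Set.mem_iInter, Set.mem_setOf_eq]
  constructor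
  · intro h; exact h _ hred
  · intro h G hG
    induction h with
    | guard ht hφ => exact (hG _ ht).1 _ hφ
    | base ht x => exact (hG _ ht).2.1 x
    | step ht _ ih => exact (hG _ ht).2.2 _ ih

/-! ### Finiteness of bounded-constant constraint sets -/

instance : Finite Ineq :=
  Finite.of_injective (fun o => match o with | .lt => false | .le => true)
    (by intro a b; cases a <;> cases b <;> simp)

lemma finite_cst_le [Finite X] (B : ℕ) : {φ : AC X | AC.cst φ ≤ B}.Finite := by
  classical
  let F : (Bool ⊕ Ineq × Fin (B+1) × (X ⊕ X × X) × Bool) → AC X := fun p =>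
    match p with
    | .inl true => AC.tt
    | .inl false => AC.ff
    | .inr (o, c, .inl x, true) => AC.upper x o c
    | .inr (o, c, .inl x, false) => AC.lower c o x
    | .inr (o, c, .inr (x, y), true) => AC.dUpper x y o c
    | .inr (o, c, .inr (x, y), false) => AC.dLower c o x y
  refine (Set.finite_range F).subset ?_
  rintro φ hφ
  simp only [Set.mem_setOf_eq] at hφ
  cases φ with
  | tt => exact ⟨.inl true, rfl⟩
  | ff => exact ⟨.inl false, rfl⟩
  | upper x o c => exact ⟨.inr (o, ⟨c, by simp [AC.cst] at hφ; omega⟩, .inl x, true), rfl⟩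
  | lower c o x => exact ⟨.inr (o, ⟨c, by simp [AC.cst] at hφ; omega⟩, .inl x, false), rfl⟩
  | dUpper x y o c => exact ⟨.inr (o, ⟨c, by simp [AC.cst] at hφ; omega⟩, .inr (x, y), true), rfl⟩
  | dLower c o x y => exact ⟨.inr (o, ⟨c, by simp [AC.cst] at hφ; omega⟩, .inr (x, y), false), rfl⟩

/-! ### Bounds on guard and update constants -/

lemma le_foldr_max {l : List ℕ} {a : ℕ} (h : a ∈ l) : a ≤ l.foldr max 0 := by
  induction l with
  | nil => simp at h
  | cons b l ih =>
    simp only [List.foldr_cons]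
    rcases List.mem_cons.mp h with h | h
    · exact h ▸ le_max_left _ _
    · exact le_trans (ih h) (le_max_right _ _)

lemma guard_cst_le (A : UTA Q X) {t : UTrans Q X} (ht : t ∈ A.trans) {φ : AC X}
    (hφ : φ ∈ t.guard) : AC.cst φ ≤ maxGuardConst A :=
  le_trans (le_foldr_max (List.mem_map_of_mem hφ))
    (le_foldr_max (List.mem_map_of_mem ht))

lemma update_cst_le [Fintype X] (A : UTA Q X) {t : UTrans Q X} (ht : t ∈ A.trans) (x : X) :
    Rhs.cst (t.update x) ≤ maxUpdateConst A := by
  have h1 : Rhs.cst (t.update x) ≤ Finset.univ.sup (fun x => Rhs.cst (t.update x)) :=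
    Finset.le_sup (f := fun y => Rhs.cst (t.update y)) (Finset.mem_univ x)
  have h2 : Finset.univ.sup (fun x => Rhs.cst (t.update x)) ≤ maxUpdateConst A :=
    le_foldr_max (List.mem_map_of_mem ht)
  exact le_trans h1 h2

/-! ### Context helpers -/

def cfam : Ctx X → Bool
  | .upper _ => true
  | .dUpper _ _ => true
  | _ => false

def cdiag : Ctx X → Bool
  | .dUpper _ _ => true
  | .dLower _ _ => true
  | _ => false

def ceqd : Ctx X → Prop
  | .dUpper z w => z = w
  | .dLower z w => z = w
  | _ => False

def encCtx : Ctx X → X × X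
  | .upper x => (x, x)
  | .lower x => (x, x)
  | .dUpper z w => (z, w)
  | .dLower z w => (z, w)

def Ctx.clk : Ctx X → X
  | .upper x => x
  | .lower x => x
  | .dUpper z _ => z
  | .dLower z _ => z

lemma fill_ne_tt (ctx : Ctx X) (c : ℕ) : ctx.fill c ≠ .tt := by
  cases ctx <;> simp [Ctx.fill]

lemma fill_ne_ff (ctx : Ctx X) (c : ℕ) : ctx.fill c ≠ .ff := by
  cases ctx <;> simp [Ctx.fill]

lemma cst_fill (ctx : Ctx X) (c : ℕ) : (ctx.fill c).cst = c := by
  cases ctx <;> rfl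

lemma fill_inj {ctx ctx' : Ctx X} {c c' : ℕ} (h : ctx.fill c = ctx'.fill c') :
    ctx = ctx' ∧ c = c' := by
  cases ctx <;> cases ctx' <;> simp_all [Ctx.fill]

lemma encCtx_inj {c1 c2 : Ctx X} (hf : cfam c1 = cfam c2)
    (h1 : ¬ ceqd c1) (h2 : ¬ ceqd c2) (he : encCtx c1 = encCtx c2) :
    c1 = c2 := by
  cases c1 <;> cases c2 <;> simp_all [cfam, ceqd, encCtx] <;>
    exact h2 (he.1.symm.trans he.2)

lemma ne_of_cdiag {ctx : Ctx X} (hd : cdiag ctx = true)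
    (hne : ¬ ceqd ctx) : (encCtx ctx).1 ≠ (encCtx ctx).2 := by
  cases ctx <;> simp_all [cdiag, ceqd, encCtx]

lemma cdiag_of_ceqd {ctx : Ctx X} (h : ceqd ctx) : cdiag ctx = true := by
  cases ctx <;> simp_all [cdiag, ceqd]

/-! ### Shape lemmas -/

lemma isWeak_fill (ctx : Ctx X) (c : ℕ) : (ctx.fill c).isWeak := by
  cases ctx <;> simp [Ctx.fill, AC.isWeak]

lemma shape_of_weak {φ : AC X} (hW : φ.isWeak) (h1 : φ ≠ .tt) (h2 : φ ≠ .ff) :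
    ∃ ctx c, Ctx.fill ctx c = φ := by
  cases φ with
  | tt => exact absurd rfl h1
  | ff => exact absurd rfl h2
  | upper x o c =>
    have hW' : o = Ineq.le := hW
    exact ⟨.upper x, c, by rw [hW']; rfl⟩
  | lower c o x =>
    have hW' : o = Ineq.le := hW
    exact ⟨.lower x, c, by rw [hW']; rfl⟩
  | dUpper x y o c =>
    have hW' : o = Ineq.le := hW
    exact ⟨.dUpper x y, c, by rw [hW']; rfl⟩
  | dLower c o x y =>
    have hW' : o = Ineq.le := hW
    exact ⟨.dLower x y, c, by rw [hW']; rfl⟩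

/-! ### wp computation lemmas -/

section WpEq

variable {g : Guard X} {up : Update X} {φ : AC X}

lemma wp_eq_tt (h : upInvA up φ = .tt) : wp φ g up = .tt := by
  unfold wp; rw [h]

lemma wp_eq_ff (h : upInvA up φ = .ff) : wp φ g up = .ff := by
  unfold wp; rw [h]

lemma wp_eq_upper {x : X} {o : Ineq} {d : ℕ} (h : upInvA up φ = .upper x o d) :
    wp φ g up = if hasUpperG g x then .tt else .upper x o d := by
  unfold wp; rw [h]

lemma wp_eq_lower {x : X} {o : Ineq} {d : ℕ} (h : upInvA up φ = .lower d o x) :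
    wp φ g up = if hasUpperG g x ∧ minUpperG g x < d then .lower (minUpperG g x) .le x
      else .lower d o x := by
  unfold wp; rw [h]

lemma wp_eq_dUpper {x y : X} {o : Ineq} {d : ℕ} (h : upInvA up φ = .dUpper x y o d) :
    wp φ g up = if case3G g x y d then .tt else .dUpper x y o d := by
  unfold wp; rw [h]

lemma wp_eq_dLower {x y : X} {o : Ineq} {d : ℕ} (h : upInvA up φ = .dLower d o x y) :
    wp φ g up = if case3G g x y d then .tt else .dLower d o x y := by
  unfold wp; rw [h]

lemma wp_tt : wp (.tt : AC X) g up = .tt := wp_eq_tt rfl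

lemma wp_ff : wp (.ff : AC X) g up = .ff := wp_eq_ff rfl

lemma wp_ne_parent {ctx : Ctx X} {c : ℕ} (h : wp φ g up = ctx.fill c) :
    φ ≠ .tt ∧ φ ≠ .ff := by
  constructor <;> rintro rfl
  · rw [wp_tt] at h; exact fill_ne_tt _ _ h.symm
  · rw [wp_ff] at h; exact fill_ne_ff _ _ h.symm

end WpEq

/-! ### Guard constant helpers -/

lemma minUpperG_le {g : Guard X} {M : ℕ} (hg : ∀ ψ ∈ g, AC.cst ψ ≤ M) {x : X}
    (h : hasUpperG g x) : minUpperG g x ≤ M := by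
  obtain ⟨o, c, hc⟩ := h
  exact le_trans (Nat.sInf_le ⟨o, hc⟩) (hg _ hc)

lemma case3G_imp {g : Guard X} {M : ℕ} (hg : ∀ ψ ∈ g, AC.cst ψ ≤ M) {x y : X} {d d' : ℕ}
    (hd : M < d) (hd' : M < d') (h : case3G g x y d) : case3G g x y d' := by
  rcases h with ⟨o, c, hc, _⟩ | ⟨o, c, hc, _⟩ | ⟨o, e, hc, hlt⟩
  · exact Or.inl ⟨o, c, hc, lt_of_le_of_lt (hg _ hc) hd'⟩
  · exact Or.inr (Or.inl ⟨o, c, hc, lt_of_le_of_lt (hg _ hc) hd'⟩)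
  · have := hg _ hc; simp [AC.cst] at this; omega

/-! ### Weakness preservation -/

lemma isWeak_upInvA {up : Update X} {ψ : AC X} (h : ψ.isWeak) : (upInvA up ψ).isWeak := by
  cases ψ with
  | tt => simpa [upInvA] using h
  | ff => simpa [upInvA] using h
  | upper x o c =>
    cases hux : up x <;> simp [upInvA, hux] <;> split_ifs <;> simp_all [AC.isWeak]
  | lower c o x =>
    cases hux : up x <;> simp [upInvA, hux] <;> split_ifs <;> simp_all [AC.isWeak]
  | dUpper x y o c =>
    cases hux : up x <;> cases huy : up y <;> simp [upInvA, hux, huy] <;> split_ifs <;>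
      simp_all [AC.isWeak]
  | dLower c o x y =>
    cases hux : up x <;> cases huy : up y <;> simp [upInvA, hux, huy] <;> split_ifs <;>
      simp_all [AC.isWeak]

lemma isWeak_wp {g : Guard X} {up : Update X} {ψ : AC X} (h : ψ.isWeak) :
    (wp ψ g up).isWeak := by
  have h' := isWeak_upInvA (up := up) h
  cases hinv : upInvA up ψ with
  | tt => rw [wp_eq_tt hinv]; trivial
  | ff => rw [wp_eq_ff hinv]; trivial
  | upper x o c =>
    rw [wp_eq_upper hinv]; rw [hinv] at h'
    split_ifs <;> simp_all [AC.isWeak]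
  | lower c o x =>
    rw [wp_eq_lower hinv]; rw [hinv] at h'
    split_ifs <;> simp_all [AC.isWeak]
  | dUpper x y o c =>
    rw [wp_eq_dUpper hinv]; rw [hinv] at h'
    split_ifs <;> simp_all [AC.isWeak]
  | dLower c o x y =>
    rw [wp_eq_dLower hinv]; rw [hinv] at h'
    split_ifs <;> simp_all [AC.isWeak]

section Steps

variable {g : Guard X} {up : Update X} {M L K0 : ℕ}

lemma step_main (hg : ∀ ψ ∈ g, AC.cst ψ ≤ M) (hup : ∀ x, Rhs.cst (up x) ≤ L)
    (hM : M ≤ K0) (hL : L ≤ K0)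
    {cB cA : ℕ} {ctxB ctxA : Ctx X}
    (hw : wp (ctxB.fill cB) g up = ctxA.fill cA)
    (hA : K0 < cA) (hB : K0 < cB) :
    cfam ctxB = cfam ctxA ∧ (cdiag ctxA = true → cdiag ctxB = true) ∧
    ∀ Δ : ℕ, wp (ctxB.fill (cB + Δ)) g up = ctxA.fill (cA + Δ) := by
  cases ctxB with
  | upper x =>
    simp only [Ctx.fill] at hw
    cases hux : up x with
    | const a =>
      have h1 : upInvA up (AC.upper x .le cB) = if (a:ℝ) ≤ (cB:ℝ) then .tt else .ff := by
        simp [upInvA, hux, Ineq.holds]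
      split_ifs at h1
      · rw [wp_eq_tt h1] at hw; exact absurd hw.symm (fill_ne_tt _ _)
      · rw [wp_eq_ff h1] at hw; exact absurd hw.symm (fill_ne_ff _ _)
    | clock y d =>
      have hd : d.natAbs ≤ L := by
        have h := hup x; rw [hux] at h; simpa [Rhs.cst] using h
      have h1 : upInvA up (AC.upper x .le cB) =
          if (cB:ℤ) - d < 0 then .ff else .upper y .le ((cB:ℤ) - d).toNat := by
        simp [upInvA, hux]
      split_ifs at h1 with hneg
      · rw [wp_eq_ff h1] at hw; exact absurd hw.symm (fill_ne_ff _ _)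
      · rw [wp_eq_upper h1] at hw
        by_cases hU : hasUpperG g y
        · rw [if_pos hU] at hw; exact absurd hw.symm (fill_ne_tt _ _)
        · rw [if_neg hU] at hw
          obtain ⟨hctx, hc⟩ :=
            fill_inj (show Ctx.fill (Ctx.upper y) ((cB:ℤ) - d).toNat = ctxA.fill cA from hw)
          subst hctx; subst hc
          refine ⟨rfl, by simp [cdiag], ?_⟩
          intro Δ
          have h3 : upInvA up (AC.upper x .le (cB + Δ)) =
              if ((cB + Δ : ℕ):ℤ) - d < 0 then .ff
              else .upper y .le (((cB + Δ : ℕ):ℤ) - d).toNat := by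
            simp [upInvA, hux]
          rw [if_neg (by push_cast; omega)] at h3
          rw [show Ctx.fill (Ctx.upper x) (cB + Δ) = AC.upper x .le (cB + Δ) from rfl,
            wp_eq_upper h3, if_neg hU]
          simp only [Ctx.fill]
          congr 1
          omega
  | lower x =>
    simp only [Ctx.fill] at hw
    cases hux : up x with
    | const a =>
      have h1 : upInvA up (AC.lower cB .le x) = if (cB:ℝ) ≤ (a:ℝ) then .tt else .ff := by
        simp [upInvA, hux, Ineq.holds]
      split_ifs at h1
      · rw [wp_eq_tt h1] at hw; exact absurd hw.symm (fill_ne_tt _ _)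
      · rw [wp_eq_ff h1] at hw; exact absurd hw.symm (fill_ne_ff _ _)
    | clock y d =>
      have hd : d.natAbs ≤ L := by
        have h := hup x; rw [hux] at h; simpa [Rhs.cst] using h
      have h1 : upInvA up (AC.lower cB .le x) =
          if (cB:ℤ) - d < 0 then .tt else .lower ((cB:ℤ) - d).toNat .le y := by
        simp [upInvA, hux]
      split_ifs at h1 with hneg
      · rw [wp_eq_tt h1] at hw; exact absurd hw.symm (fill_ne_tt _ _)
      · rw [wp_eq_lower h1] at hw
        by_cases hC : hasUpperG g y ∧ minUpperG g y < ((cB:ℤ) - d).toNat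
        · rw [if_pos hC] at hw
          obtain ⟨hctx, hc⟩ :=
            fill_inj (show Ctx.fill (Ctx.lower y) (minUpperG g y) = ctxA.fill cA from hw)
          have := minUpperG_le hg hC.1
          omega
        · rw [if_neg hC] at hw
          obtain ⟨hctx, hc⟩ :=
            fill_inj (show Ctx.fill (Ctx.lower y) ((cB:ℤ) - d).toNat = ctxA.fill cA from hw)
          subst hctx; subst hc
          have hU : ¬ hasUpperG g y := by
            intro hU
            exact hC ⟨hU, by have := minUpperG_le hg hU; omega⟩
          refine ⟨rfl, by simp [cdiag], ?_⟩
          intro Δ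
          have h3 : upInvA up (AC.lower (cB + Δ) .le x) =
              if ((cB + Δ : ℕ):ℤ) - d < 0 then .tt
              else .lower (((cB + Δ : ℕ):ℤ) - d).toNat .le y := by
            simp [upInvA, hux]
          rw [if_neg (by push_cast; omega)] at h3
          rw [show Ctx.fill (Ctx.lower x) (cB + Δ) = AC.lower (cB + Δ) .le x from rfl,
            wp_eq_lower h3, if_neg (fun hC2 => hU hC2.1)]
          simp only [Ctx.fill]
          congr 1
          omega
  | dUpper x y =>
    simp only [Ctx.fill] at hw
    cases hux : up x with
    | const a =>
      have ha : a ≤ L := by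
        have h := hup x; rw [hux] at h; simpa [Rhs.cst] using h
      cases huy : up y with
      | const b =>
        have h1 : upInvA up (AC.dUpper x y .le cB) =
            if (a:ℝ) - (b:ℝ) ≤ (cB:ℝ) then .tt else .ff := by
          simp [upInvA, hux, huy, Ineq.holds]
        split_ifs at h1
        · rw [wp_eq_tt h1] at hw; exact absurd hw.symm (fill_ne_tt _ _)
        · rw [wp_eq_ff h1] at hw; exact absurd hw.symm (fill_ne_ff _ _)
      | clock z e =>
        have he : e.natAbs ≤ L := by
          have h := hup y; rw [huy] at h; simpa [Rhs.cst] using h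
        have h1 : upInvA up (AC.dUpper x y .le cB) =
            if (a:ℤ) - e - cB < 0 then .tt
            else .lower ((a:ℤ) - e - cB).toNat .le z := by
          simp [upInvA, hux, huy]
        split_ifs at h1 with hneg
        · rw [wp_eq_tt h1] at hw; exact absurd hw.symm (fill_ne_tt _ _)
        · rw [wp_eq_lower h1] at hw
          by_cases hC : hasUpperG g z ∧ minUpperG g z < ((a:ℤ) - e - cB).toNat
          · rw [if_pos hC] at hw
            obtain ⟨hctx, hc⟩ :=
              fill_inj (show Ctx.fill (Ctx.lower z) (minUpperG g z) = ctxA.fill cA from hw)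
            have := minUpperG_le hg hC.1
            omega
          · rw [if_neg hC] at hw
            obtain ⟨hctx, hc⟩ :=
              fill_inj (show Ctx.fill (Ctx.lower z) ((a:ℤ) - e - cB).toNat = ctxA.fill cA from hw)
            omega
    | clock z e =>
      have he : e.natAbs ≤ L := by
        have h := hup x; rw [hux] at h; simpa [Rhs.cst] using h
      cases huy : up y with
      | const b =>
        have hb : b ≤ L := by
          have h := hup y; rw [huy] at h; simpa [Rhs.cst] using h
        have h1 : upInvA up (AC.dUpper x y .le cB) =
            if (cB:ℤ) + b - e < 0 then .ff
            else .upper z .le ((cB:ℤ) + b - e).toNat := by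
          simp [upInvA, hux, huy]
        split_ifs at h1 with hneg
        · rw [wp_eq_ff h1] at hw; exact absurd hw.symm (fill_ne_ff _ _)
        · rw [wp_eq_upper h1] at hw
          by_cases hU : hasUpperG g z
          · rw [if_pos hU] at hw; exact absurd hw.symm (fill_ne_tt _ _)
          · rw [if_neg hU] at hw
            obtain ⟨hctx, hc⟩ :=
              fill_inj (show Ctx.fill (Ctx.upper z) ((cB:ℤ) + b - e).toNat = ctxA.fill cA from hw)
            subst hctx; subst hc
            refine ⟨rfl, by simp [cdiag], ?_⟩
            intro Δ
            have h3 : upInvA up (AC.dUpper x y .le (cB + Δ)) =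
                if ((cB + Δ : ℕ):ℤ) + b - e < 0 then .ff
                else .upper z .le (((cB + Δ : ℕ):ℤ) + b - e).toNat := by
              simp [upInvA, hux, huy]
            rw [if_neg (by push_cast; omega)] at h3
            rw [show Ctx.fill (Ctx.dUpper x y) (cB + Δ) = AC.dUpper x y .le (cB + Δ) from rfl,
              wp_eq_upper h3, if_neg hU]
            simp only [Ctx.fill]
            congr 1
            omega
      | clock w f =>
        have hf : f.natAbs ≤ L := by
          have h := hup y; rw [huy] at h; simpa [Rhs.cst] using h
        have h1 : upInvA up (AC.dUpper x y .le cB) =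
            if (cB:ℤ) - e + f < 0 then .dLower (-((cB:ℤ) - e + f)).toNat .le w z
            else .dUpper z w .le ((cB:ℤ) - e + f).toNat := by
          simp [upInvA, hux, huy]
        split_ifs at h1 with hneg
        · rw [wp_eq_dLower h1] at hw
          by_cases h3 : case3G g w z (-((cB:ℤ) - e + f)).toNat
          · rw [if_pos h3] at hw; exact absurd hw.symm (fill_ne_tt _ _)
          · rw [if_neg h3] at hw
            obtain ⟨hctx, hc⟩ :=
              fill_inj (show Ctx.fill (Ctx.dLower w z) (-((cB:ℤ) - e + f)).toNat = ctxA.fill cA from hw)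
            omega
        · rw [wp_eq_dUpper h1] at hw
          by_cases h3 : case3G g z w ((cB:ℤ) - e + f).toNat
          · rw [if_pos h3] at hw; exact absurd hw.symm (fill_ne_tt _ _)
          · rw [if_neg h3] at hw
            obtain ⟨hctx, hc⟩ :=
              fill_inj (show Ctx.fill (Ctx.dUpper z w) ((cB:ℤ) - e + f).toNat = ctxA.fill cA from hw)
            subst hctx; subst hc
            refine ⟨rfl, fun _ => rfl, ?_⟩
            intro Δ
            have h4 : upInvA up (AC.dUpper x y .le (cB + Δ)) =
                if ((cB + Δ : ℕ):ℤ) - e + f < 0 then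
                  .dLower (-(((cB + Δ : ℕ):ℤ) - e + f)).toNat .le w z
                else .dUpper z w .le (((cB + Δ : ℕ):ℤ) - e + f).toNat := by
              simp [upInvA, hux, huy]
            rw [if_neg (by push_cast; omega)] at h4
            rw [show Ctx.fill (Ctx.dUpper x y) (cB + Δ) = AC.dUpper x y .le (cB + Δ) from rfl,
              wp_eq_dUpper h4]
            have h5 : ¬ case3G g z w (((cB + Δ : ℕ):ℤ) - e + f).toNat := by
              intro hcc
              exact h3 (case3G_imp hg (by omega) (by omega) hcc)
            rw [if_neg h5]
            simp only [Ctx.fill]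
            congr 1
            omega
  | dLower x y =>
    simp only [Ctx.fill] at hw
    cases hux : up x with
    | const a =>
      have ha : a ≤ L := by
        have h := hup x; rw [hux] at h; simpa [Rhs.cst] using h
      cases huy : up y with
      | const b =>
        have h1 : upInvA up (AC.dLower cB .le x y) =
            if (cB:ℝ) ≤ (a:ℝ) - (b:ℝ) then .tt else .ff := by
          simp [upInvA, hux, huy, Ineq.holds]
          congr 1
        split_ifs at h1
        · rw [wp_eq_tt h1] at hw; exact absurd hw.symm (fill_ne_tt _ _)
        · rw [wp_eq_ff h1] at hw; exact absurd hw.symm (fill_ne_ff _ _)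
      | clock z e =>
        have he : e.natAbs ≤ L := by
          have h := hup y; rw [huy] at h; simpa [Rhs.cst] using h
        have h1 : upInvA up (AC.dLower cB .le x y) =
            if (a:ℤ) - e - cB < 0 then .ff
            else .upper z .le ((a:ℤ) - e - cB).toNat := by
          simp [upInvA, hux, huy]
        split_ifs at h1 with hneg
        · rw [wp_eq_ff h1] at hw; exact absurd hw.symm (fill_ne_ff _ _)
        · rw [wp_eq_upper h1] at hw
          by_cases hU : hasUpperG g z
          · rw [if_pos hU] at hw; exact absurd hw.symm (fill_ne_tt _ _)
          · rw [if_neg hU] at hw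
            obtain ⟨hctx, hc⟩ :=
              fill_inj (show Ctx.fill (Ctx.upper z) ((a:ℤ) - e - cB).toNat = ctxA.fill cA from hw)
            omega
    | clock z e =>
      have he : e.natAbs ≤ L := by
        have h := hup x; rw [hux] at h; simpa [Rhs.cst] using h
      cases huy : up y with
      | const b =>
        have hb : b ≤ L := by
          have h := hup y; rw [huy] at h; simpa [Rhs.cst] using h
        have h1 : upInvA up (AC.dLower cB .le x y) =
            if (cB:ℤ) + b - e < 0 then .tt
            else .lower ((cB:ℤ) + b - e).toNat .le z := by
          simp [upInvA, hux, huy]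
        split_ifs at h1 with hneg
        · rw [wp_eq_tt h1] at hw; exact absurd hw.symm (fill_ne_tt _ _)
        · rw [wp_eq_lower h1] at hw
          by_cases hC : hasUpperG g z ∧ minUpperG g z < ((cB:ℤ) + b - e).toNat
          · rw [if_pos hC] at hw
            obtain ⟨hctx, hc⟩ :=
              fill_inj (show Ctx.fill (Ctx.lower z) (minUpperG g z) = ctxA.fill cA from hw)
            have := minUpperG_le hg hC.1
            omega
          · rw [if_neg hC] at hw
            obtain ⟨hctx, hc⟩ :=
              fill_inj (show Ctx.fill (Ctx.lower z) ((cB:ℤ) + b - e).toNat = ctxA.fill cA from hw)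
            subst hctx; subst hc
            have hU : ¬ hasUpperG g z := by
              intro hU
              exact hC ⟨hU, by have := minUpperG_le hg hU; omega⟩
            refine ⟨rfl, by simp [cdiag], ?_⟩
            intro Δ
            have h3 : upInvA up (AC.dLower (cB + Δ) .le x y) =
                if ((cB + Δ : ℕ):ℤ) + b - e < 0 then .tt
                else .lower (((cB + Δ : ℕ):ℤ) + b - e).toNat .le z := by
              simp [upInvA, hux, huy]
            rw [if_neg (by push_cast; omega)] at h3
            rw [show Ctx.fill (Ctx.dLower x y) (cB + Δ) = AC.dLower (cB + Δ) .le x y from rfl,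
              wp_eq_lower h3, if_neg (fun hC2 => hU hC2.1)]
            simp only [Ctx.fill]
            congr 1
            omega
      | clock w f =>
        have hf : f.natAbs ≤ L := by
          have h := hup y; rw [huy] at h; simpa [Rhs.cst] using h
        have h1 : upInvA up (AC.dLower cB .le x y) =
            if (cB:ℤ) - e + f < 0 then .dUpper w z .le (-((cB:ℤ) - e + f)).toNat
            else .dLower ((cB:ℤ) - e + f).toNat .le z w := by
          simp [upInvA, hux, huy]
        split_ifs at h1 with hneg
        · rw [wp_eq_dUpper h1] at hw
          by_cases h3 : case3G g w z (-((cB:ℤ) - e + f)).toNat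
          · rw [if_pos h3] at hw; exact absurd hw.symm (fill_ne_tt _ _)
          · rw [if_neg h3] at hw
            obtain ⟨hctx, hc⟩ :=
              fill_inj (show Ctx.fill (Ctx.dUpper w z) (-((cB:ℤ) - e + f)).toNat = ctxA.fill cA from hw)
            omega
        · rw [wp_eq_dLower h1] at hw
          by_cases h3 : case3G g z w ((cB:ℤ) - e + f).toNat
          · rw [if_pos h3] at hw; exact absurd hw.symm (fill_ne_tt _ _)
          · rw [if_neg h3] at hw
            obtain ⟨hctx, hc⟩ :=
              fill_inj (show Ctx.fill (Ctx.dLower z w) ((cB:ℤ) - e + f).toNat = ctxA.fill cA from hw)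
            subst hctx; subst hc
            refine ⟨rfl, fun _ => rfl, ?_⟩
            intro Δ
            have h4 : upInvA up (AC.dLower (cB + Δ) .le x y) =
                if ((cB + Δ : ℕ):ℤ) - e + f < 0 then
                  .dUpper w z .le (-(((cB + Δ : ℕ):ℤ) - e + f)).toNat
                else .dLower (((cB + Δ : ℕ):ℤ) - e + f).toNat .le z w := by
              simp [upInvA, hux, huy]
            rw [if_neg (by push_cast; omega)] at h4
            rw [show Ctx.fill (Ctx.dLower x y) (cB + Δ) = AC.dLower (cB + Δ) .le x y from rfl,
              wp_eq_dLower h4]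
            have h5 : ¬ case3G g z w (((cB + Δ : ℕ):ℤ) - e + f).toNat := by
              intro hcc
              exact h3 (case3G_imp hg (by omega) (by omega) hcc)
            rw [if_neg h5]
            simp only [Ctx.fill]
            congr 1
            omega

end Steps

section Steps2

variable {g : Guard X} {up : Update X} {M L K0 : ℕ}

lemma step_eqdiag {cB cA : ℕ} {ctxB ctxA : Ctx X}
    (hw : wp (ctxB.fill cB) g up = ctxA.fill cA)
    (hB : ceqd ctxB) : ceqd ctxA ∧ cA = cB := by
  cases ctxB with
  | upper x => simp [ceqd] at hB
  | lower x => simp [ceqd] at hB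
  | dUpper x y =>
    have hxy : x = y := hB
    subst hxy
    simp only [Ctx.fill] at hw
    cases hux : up x with
    | const a =>
      have h1 : upInvA up (AC.dUpper x x .le cB) =
          if (a:ℝ) - (a:ℝ) ≤ (cB:ℝ) then .tt else .ff := by
        simp [upInvA, hux, Ineq.holds]
      split_ifs at h1
      · rw [wp_eq_tt h1] at hw; exact absurd hw.symm (fill_ne_tt _ _)
      · rw [wp_eq_ff h1] at hw; exact absurd hw.symm (fill_ne_ff _ _)
    | clock z e =>
      have h1 : upInvA up (AC.dUpper x x .le cB) = .dUpper z z .le cB := by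
        simp [upInvA, hux]
      rw [wp_eq_dUpper h1] at hw
      by_cases h3 : case3G g z z cB
      · rw [if_pos h3] at hw; exact absurd hw.symm (fill_ne_tt _ _)
      · rw [if_neg h3] at hw
        obtain ⟨hctx, hc⟩ :=
          fill_inj (show Ctx.fill (Ctx.dUpper z z) cB = ctxA.fill cA from hw)
        subst hctx
        exact ⟨rfl, hc.symm⟩
  | dLower x y =>
    have hxy : x = y := hB
    subst hxy
    simp only [Ctx.fill] at hw
    cases hux : up x with
    | const a =>
      have h1 : upInvA up (AC.dLower cB .le x x) =
          if (cB:ℝ) ≤ (a:ℝ) - (a:ℝ) then .tt else .ff := by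
        simp [upInvA, hux, Ineq.holds]
      split_ifs at h1
      · rw [wp_eq_tt h1] at hw; exact absurd hw.symm (fill_ne_tt _ _)
      · rw [wp_eq_ff h1] at hw; exact absurd hw.symm (fill_ne_ff _ _)
    | clock z e =>
      have h1 : upInvA up (AC.dLower cB .le x x) = .dLower cB .le z z := by
        simp [upInvA, hux]
      rw [wp_eq_dLower h1] at hw
      by_cases h3 : case3G g z z cB
      · rw [if_pos h3] at hw; exact absurd hw.symm (fill_ne_tt _ _)
      · rw [if_neg h3] at hw
        obtain ⟨hctx, hc⟩ :=
          fill_inj (show Ctx.fill (Ctx.dLower z z) cB = ctxA.fill cA from hw)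
        subst hctx
        exact ⟨rfl, hc.symm⟩

lemma step_cst_le (hg : ∀ ψ ∈ g, AC.cst ψ ≤ M) (hup : ∀ x, Rhs.cst (up x) ≤ L)
    (hM : M ≤ K0) (hL : L ≤ K0) (ψ : AC X) :
    AC.cst (wp ψ g up) ≤ max (AC.cst ψ) K0 + 2 * L := by
  cases ψ with
  | tt => rw [wp_tt]; simp [AC.cst]
  | ff => rw [wp_ff]; simp [AC.cst]
  | upper x o c =>
    cases hux : up x with
    | const a =>
      have h1 : upInvA up (AC.upper x o c) =
          if o.holds (a:ℝ) (c:ℝ) then .tt else .ff := by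
        simp [upInvA, hux]
      split_ifs at h1
      · rw [wp_eq_tt h1]; simp [AC.cst]
      · rw [wp_eq_ff h1]; simp [AC.cst]
    | clock y d =>
      have hd : d.natAbs ≤ L := by
        have h := hup x; rw [hux] at h; simpa [Rhs.cst] using h
      have h1 : upInvA up (AC.upper x o c) =
          if (c:ℤ) - d < 0 then .ff else .upper y o ((c:ℤ) - d).toNat := by
        simp [upInvA, hux]
      split_ifs at h1
      · rw [wp_eq_ff h1]; simp [AC.cst]
      · rw [wp_eq_upper h1]
        split_ifs
        · simp [AC.cst]
        · simp only [AC.cst]; omega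
  | lower c o x =>
    cases hux : up x with
    | const a =>
      have h1 : upInvA up (AC.lower c o x) =
          if o.holds (c:ℝ) (a:ℝ) then .tt else .ff := by
        simp [upInvA, hux]
      split_ifs at h1
      · rw [wp_eq_tt h1]; simp [AC.cst]
      · rw [wp_eq_ff h1]; simp [AC.cst]
    | clock y d =>
      have hd : d.natAbs ≤ L := by
        have h := hup x; rw [hux] at h; simpa [Rhs.cst] using h
      have h1 : upInvA up (AC.lower c o x) =
          if (c:ℤ) - d < 0 then .tt else .lower ((c:ℤ) - d).toNat o y := by
        simp [upInvA, hux]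
      split_ifs at h1
      · rw [wp_eq_tt h1]; simp [AC.cst]
      · rw [wp_eq_lower h1]
        split_ifs with h2
        · have := minUpperG_le hg h2.1; simp only [AC.cst]; omega
        · simp only [AC.cst]; omega
  | dUpper x y o c =>
    cases hux : up x with
    | const a =>
      have ha : a ≤ L := by
        have h := hup x; rw [hux] at h; simpa [Rhs.cst] using h
      cases huy : up y with
      | const b =>
        have h1 : upInvA up (AC.dUpper x y o c) =
            if o.holds ((a:ℝ) - (b:ℝ)) (c:ℝ) then .tt else .ff := by
          simp [upInvA, hux, huy]
        split_ifs at h1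
        · rw [wp_eq_tt h1]; simp [AC.cst]
        · rw [wp_eq_ff h1]; simp [AC.cst]
      | clock z e =>
        have he : e.natAbs ≤ L := by
          have h := hup y; rw [huy] at h; simpa [Rhs.cst] using h
        have h1 : upInvA up (AC.dUpper x y o c) =
            if (a:ℤ) - e - c < 0 then .tt
            else .lower ((a:ℤ) - e - c).toNat o z := by
          simp [upInvA, hux, huy]
        split_ifs at h1
        · rw [wp_eq_tt h1]; simp [AC.cst]
        · rw [wp_eq_lower h1]
          split_ifs with h2
          · have := minUpperG_le hg h2.1; simp only [AC.cst]; omega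
          · simp only [AC.cst]; omega
    | clock z e =>
      have he : e.natAbs ≤ L := by
        have h := hup x; rw [hux] at h; simpa [Rhs.cst] using h
      cases huy : up y with
      | const b =>
        have hb : b ≤ L := by
          have h := hup y; rw [huy] at h; simpa [Rhs.cst] using h
        have h1 : upInvA up (AC.dUpper x y o c) =
            if (c:ℤ) + b - e < 0 then .ff
            else .upper z o ((c:ℤ) + b - e).toNat := by
          simp [upInvA, hux, huy]
        split_ifs at h1
        · rw [wp_eq_ff h1]; simp [AC.cst]
        · rw [wp_eq_upper h1]
          split_ifs
          · simp [AC.cst]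
          · simp only [AC.cst]; omega
      | clock w f =>
        have hf : f.natAbs ≤ L := by
          have h := hup y; rw [huy] at h; simpa [Rhs.cst] using h
        have h1 : upInvA up (AC.dUpper x y o c) =
            if (c:ℤ) - e + f < 0 then .dLower (-((c:ℤ) - e + f)).toNat o w z
            else .dUpper z w o ((c:ℤ) - e + f).toNat := by
          simp [upInvA, hux, huy]
        split_ifs at h1
        · rw [wp_eq_dLower h1]
          split_ifs
          · simp [AC.cst]
          · simp only [AC.cst]; omega
        · rw [wp_eq_dUpper h1]
          split_ifs
          · simp [AC.cst]
          · simp only [AC.cst]; omega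
  | dLower c o x y =>
    cases hux : up x with
    | const a =>
      have ha : a ≤ L := by
        have h := hup x; rw [hux] at h; simpa [Rhs.cst] using h
      cases huy : up y with
      | const b =>
        have h1 : upInvA up (AC.dLower c o x y) =
            if o.holds (c:ℝ) ((a:ℝ) - (b:ℝ)) then .tt else .ff := by
          simp [upInvA, hux, huy]
        split_ifs at h1
        · rw [wp_eq_tt h1]; simp [AC.cst]
        · rw [wp_eq_ff h1]; simp [AC.cst]
      | clock z e =>
        have he : e.natAbs ≤ L := by
          have h := hup y; rw [huy] at h; simpa [Rhs.cst] using h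
        have h1 : upInvA up (AC.dLower c o x y) =
            if (a:ℤ) - e - c < 0 then .ff
            else .upper z o ((a:ℤ) - e - c).toNat := by
          simp [upInvA, hux, huy]
        split_ifs at h1
        · rw [wp_eq_ff h1]; simp [AC.cst]
        · rw [wp_eq_upper h1]
          split_ifs
          · simp [AC.cst]
          · simp only [AC.cst]; omega
    | clock z e =>
      have he : e.natAbs ≤ L := by
        have h := hup x; rw [hux] at h; simpa [Rhs.cst] using h
      cases huy : up y with
      | const b =>
        have hb : b ≤ L := by
          have h := hup y; rw [huy] at h; simpa [Rhs.cst] using h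
        have h1 : upInvA up (AC.dLower c o x y) =
            if (c:ℤ) + b - e < 0 then .tt
            else .lower ((c:ℤ) + b - e).toNat o z := by
          simp [upInvA, hux, huy]
        split_ifs at h1
        · rw [wp_eq_tt h1]; simp [AC.cst]
        · rw [wp_eq_lower h1]
          split_ifs with h2
          · have := minUpperG_le hg h2.1; simp only [AC.cst]; omega
          · simp only [AC.cst]; omega
      | clock w f =>
        have hf : f.natAbs ≤ L := by
          have h := hup y; rw [huy] at h; simpa [Rhs.cst] using h
        have h1 : upInvA up (AC.dLower c o x y) =
            if (c:ℤ) - e + f < 0 then .dUpper w z o (-((c:ℤ) - e + f)).toNat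
            else .dLower ((c:ℤ) - e + f).toNat o z w := by
          simp [upInvA, hux, huy]
        split_ifs at h1
        · rw [wp_eq_dUpper h1]
          split_ifs
          · simp [AC.cst]
          · simp only [AC.cst]; omega
        · rw [wp_eq_dLower h1]
          split_ifs
          · simp [AC.cst]
          · simp only [AC.cst]; omega

lemma wp_base_cst (hg : ∀ ψ ∈ g, AC.cst ψ ≤ M) (hup : ∀ x, Rhs.cst (up x) ≤ L) (x : X) :
    AC.cst (wp (.lower 0 .le x) g up) ≤ max M L := by
  cases hux : up x with
  | const a =>
    have h1 : upInvA up (AC.lower 0 .le x) =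
        if (0:ℝ) ≤ (a:ℝ) then .tt else .ff := by
      simp [upInvA, hux, Ineq.holds]
    rw [if_pos (by positivity)] at h1
    rw [wp_eq_tt h1]; simp [AC.cst]
  | clock y d =>
    have hd : d.natAbs ≤ L := by
      have h := hup x; rw [hux] at h; simpa [Rhs.cst] using h
    have h1 : upInvA up (AC.lower 0 .le x) =
        if ((0:ℕ):ℤ) - d < 0 then .tt else .lower (((0:ℕ):ℤ) - d).toNat .le y := by
      simp [upInvA, hux]
    split_ifs at h1
    · rw [wp_eq_tt h1]; simp [AC.cst]
    · rw [wp_eq_lower h1]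
      split_ifs with h2
      · have := minUpperG_le hg h2.1; simp only [AC.cst]; omega
      · simp only [AC.cst]; omega

end Steps2

/-! ### Chains extracted from derivations -/

def fcons {α : Type} (a : α) (f : ℕ → α) : ℕ → α
  | 0 => a
  | (k+1) => f k

@[simp] lemma fcons_zero {α : Type} (a : α) (f : ℕ → α) : fcons a f 0 = a := rfl
@[simp] lemma fcons_succ {α : Type} (a : α) (f : ℕ → α) (k : ℕ) : fcons a f (k+1) = f k := rfl

lemma der_chain [Fintype X] {A : UTA Q X} (hwk : weakGuards A) {q : Q} {φ : AC X}
    (h : Der A q φ) :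
    ∃ (n : ℕ) (qs : ℕ → Q) (ts : ℕ → UTrans Q X) (φs : ℕ → AC X),
      qs 0 = q ∧ φs 0 = φ ∧
      (∀ k, k < n → ts k ∈ A.trans ∧ (ts k).src = qs k ∧ (ts k).tgt = qs (k+1) ∧
         φs k = wp (φs (k+1)) (ts k).guard (ts k).update) ∧
      Der A (qs n) (φs n) ∧
      AC.cst (φs n) ≤ max (maxGuardConst A) (maxUpdateConst A) ∧ (φs n).isWeak := by
  induction h with
  | @guard t ht φ hφ =>
    exact ⟨0, fun _ => t.src, fun _ => t, fun _ => φ, rfl, rfl,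
      fun k hk => absurd hk (Nat.not_lt_zero k), Der.guard ht hφ,
      le_trans (guard_cst_le A ht hφ) (le_max_left _ _), hwk t ht φ hφ⟩
  | @base t ht x =>
    refine ⟨0, fun _ => t.src, fun _ => t, fun _ => wp (.lower 0 .le x) t.guard t.update,
      rfl, rfl, fun k hk => absurd hk (Nat.not_lt_zero k), Der.base ht x, ?_, ?_⟩
    · exact wp_base_cst (fun ψ hψ => guard_cst_le A ht hψ) (fun y => update_cst_le A ht y) x
    · exact isWeak_wp rfl
  | @step t ht φ hder ih =>
    obtain ⟨n, qs, ts, φs, h0, hφ0, hstep, hdn, hcst, hwkn⟩ := ih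
    refine ⟨n + 1, fcons t.src qs, fcons t ts, fcons (wp φ t.guard t.update) φs,
      rfl, rfl, ?_, by simp only [fcons_succ]; exact hdn,
      by simp only [fcons_succ]; exact hcst, by simp only [fcons_succ]; exact hwkn⟩
    intro k hk
    cases k with
    | zero =>
      refine ⟨ht, rfl, by simpa using h0.symm, ?_⟩
      simp [hφ0]
    | succ k =>
      have := hstep k (by omega)
      simpa using this

lemma chain_der {A : UTA Q X} {n : ℕ} {qs : ℕ → Q} {ts : ℕ → UTrans Q X} {φs : ℕ → AC X}
    (hstep : ∀ k, k < n → ts k ∈ A.trans ∧ (ts k).src = qs k ∧ (ts k).tgt = qs (k+1) ∧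
       φs k = wp (φs (k+1)) (ts k).guard (ts k).update)
    (hder : Der A (qs n) (φs n)) : ∀ k, k ≤ n → Der A (qs k) (φs k) := by
  have H : ∀ m k, k + m = n → Der A (qs k) (φs k) := by
    intro m
    induction m with
    | zero => intro k hk; rw [show k = n by omega]; exact hder
    | succ m ih =>
      intro k hk
      obtain ⟨ht, hsrc, htgt, hφ⟩ := hstep k (by omega)
      have h2 := ih (k + 1) (by omega)
      rw [hφ, ← hsrc]
      exact Der.step ht (htgt ▸ h2)
  exact fun k hk => H (n - k) k (by omega)

lemma chain_weak {A : UTA Q X} {n : ℕ} {qs : ℕ → Q} {ts : ℕ → UTrans Q X} {φs : ℕ → AC X}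
    (hstep : ∀ k, k < n → ts k ∈ A.trans ∧ (ts k).src = qs k ∧ (ts k).tgt = qs (k+1) ∧
       φs k = wp (φs (k+1)) (ts k).guard (ts k).update)
    (hn : (φs n).isWeak) : ∀ k, k ≤ n → (φs k).isWeak := by
  have H : ∀ m k, k + m = n → (φs k).isWeak := by
    intro m
    induction m with
    | zero => intro k hk; rw [show k = n by omega]; exact hn
    | succ m ih =>
      intro k hk
      obtain ⟨_, _, _, hφ⟩ := hstep k (by omega)
      rw [hφ]
      exact isWeak_wp (ih (k + 1) (by omega))
  exact fun k hk => H (n - k) k (by omega)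

lemma chain_proper {A : UTA Q X} {n : ℕ} {qs : ℕ → Q} {ts : ℕ → UTrans Q X} {φs : ℕ → AC X}
    (hstep : ∀ k, k < n → ts k ∈ A.trans ∧ (ts k).src = qs k ∧ (ts k).tgt = qs (k+1) ∧
       φs k = wp (φs (k+1)) (ts k).guard (ts k).update)
    (hW : ∀ k, k ≤ n → (φs k).isWeak)
    (h0 : φs 0 ≠ .tt ∧ φs 0 ≠ .ff) : ∀ k, k ≤ n → φs k ≠ .tt ∧ φs k ≠ .ff := by
  intro k
  induction k with
  | zero => exact fun _ => h0
  | succ k ih =>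
    intro hk
    have hp := ih (by omega)
    obtain ⟨_, _, _, hφ⟩ := hstep k (by omega)
    obtain ⟨ctx, c, hc⟩ := shape_of_weak (φ := φs k) (hW k (by omega)) hp.1 hp.2
    have hwp : wp (φs (k+1)) (ts k).guard (ts k).update = ctx.fill c := by
      rw [← hφ, hc]
    exact wp_ne_parent hwp

end Stmt14
namespace Stmt14

lemma backward {Q X : Type} [Fintype Q] [Fintype X] (A : UTA Q X) (hwk : weakGuards A)
    {q : Q} {φ : AC X} (hmem : Der A q φ)
    (hbig : max (maxGuardConst A) (maxUpdateConst A) +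
      2 * maxUpdateConst A * Fintype.card Q * Fintype.card X ^ 2 < AC.cst φ) :
    ∃ q', ¬ (Set.Finite {ψ | Der A q' ψ}) := by
  classical
  set M := maxGuardConst A with hMdef
  set L := maxUpdateConst A with hLdef
  set K0 := max M L with hK0def
  set cQ := Fintype.card Q with hcQdef
  set cX := Fintype.card X with hcXdef
  set N := cQ * (cX * cX) with hNdef
  obtain ⟨n, qs, ts, φs, hq0, hφ0, hstep, hdn, hcstn, hwkn⟩ := der_chain hwk hmem
  set c : ℕ → ℕ := fun k => AC.cst (φs k) with hcdef
  have hc0 : c 0 = AC.cst φ := by rw [hcdef]; simp only; rw [hφ0]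
  have hc0big : K0 + 2 * L * N < c 0 := by
    rw [hc0]
    calc K0 + 2 * L * N = K0 + 2 * L * cQ * cX ^ 2 := by rw [hNdef]; ring
    _ < AC.cst φ := hbig
  -- weakness / properness / shape along the chain
  have hWall : ∀ k, k ≤ n → (φs k).isWeak := chain_weak hstep hwkn
  have hprop0 : φs 0 ≠ .tt ∧ φs 0 ≠ .ff := by
    constructor <;> intro h <;> rw [h] at hφ0 <;> rw [← hφ0] at hbig <;>
      simp [AC.cst] at hbig
  have hPall : ∀ k, k ≤ n → φs k ≠ .tt ∧ φs k ≠ .ff := chain_proper hstep hWall hprop0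
  have hrep : ∀ k, ∃ ctx cc, k ≤ n → Ctx.fill ctx cc = φs k := by
    intro k
    by_cases hk : k ≤ n
    · obtain ⟨ctx, cc, h⟩ := shape_of_weak (hWall k hk) (hPall k hk).1 (hPall k hk).2
      exact ⟨ctx, cc, fun _ => h⟩
    · obtain ⟨ctx0, cc0, h⟩ :=
        shape_of_weak (hWall 0 (by omega)) (hPall 0 (by omega)).1 (hPall 0 (by omega)).2
      exact ⟨ctx0, cc0, fun h' => absurd h' hk⟩
  choose ctxs cs hcs using hrep
  have hfill : ∀ k, k ≤ n → Ctx.fill (ctxs k) (c k) = φs k := by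
    intro k hk
    have h := hcs k hk
    have h2 : cs k = c k := by show cs k = (φs k).cst; rw [← h, cst_fill]
    rwa [h2] at h
  -- nonemptiness
  have hcQ1 : 1 ≤ cQ := Fintype.card_pos_iff.mpr ⟨q⟩
  have hcX1 : 1 ≤ cX := Fintype.card_pos_iff.mpr ⟨Ctx.clk (ctxs 0)⟩
  have hN1 : 1 ≤ N := by
    have := Nat.mul_le_mul hcQ1 (Nat.mul_le_mul hcX1 hcX1)
    simpa [hNdef] using this
  -- guard and update bounds on transitions
  have hgM : ∀ k, k < n → ∀ ψ ∈ (ts k).guard, AC.cst ψ ≤ M :=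
    fun k hk ψ hψ => guard_cst_le A (hstep k hk).1 hψ
  have hupL : ∀ k, k < n → ∀ x, Rhs.cst ((ts k).update x) ≤ L :=
    fun k hk x => update_cst_le A (hstep k hk).1 x
  have hWP : ∀ k, k < n →
      wp (Ctx.fill (ctxs (k+1)) (c (k+1))) (ts k).guard (ts k).update
        = Ctx.fill (ctxs k) (c k) := by
    intro k hk
    rw [hfill (k+1) (by omega), hfill k (by omega)]
    exact ((hstep k hk).2.2.2).symm
  have hca : ∀ k, k < n → c k ≤ max (c (k+1)) K0 + 2 * L := by
    intro k hk
    have h := step_cst_le (hgM k hk) (hupL k hk) (le_max_left M L) (le_max_right M L)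
      (φs (k+1))
    rw [← (hstep k hk).2.2.2] at h
    exact h
  -- first index with a small constant
  have hex : ∃ k, k ≤ n ∧ c k ≤ K0 := ⟨n, le_refl n, hcstn⟩
  obtain ⟨s, hsn, hcsle, hseg⟩ : ∃ s, s ≤ n ∧ c s ≤ K0 ∧ ∀ k, k < s → K0 < c k := by
    refine ⟨Nat.find hex, (Nat.find_spec hex).1, (Nat.find_spec hex).2, ?_⟩
    intro k hk
    by_contra hcon
    obtain ⟨ha, hb⟩ := Nat.find_spec hex
    have h1 : k ≤ n := by omega
    have h2 : c k ≤ K0 := by omega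
    have := Nat.find_min' hex ⟨h1, h2⟩
    omega
  by_cases hs0 : s = 0
  · exfalso; rw [hs0] at hcsle; omega
  obtain ⟨s1, rfl⟩ : ∃ s1, s = s1 + 1 := ⟨s - 1, by omega⟩
  have hs1n : s1 < n := by omega
  have hcs1 : c s1 ≤ K0 + 2 * L := by
    have h := hca s1 hs1n
    omega
  -- the max function over the tail of the segment
  set mx : ℕ → ℕ := fun k => (Finset.Icc k s1).sup c with hmxdef
  have hmxge : ∀ k j, k ≤ j → j ≤ s1 → c j ≤ mx k := by
    intro k j h1 h2
    exact Finset.le_sup (Finset.mem_Icc.mpr ⟨h1, h2⟩)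
  have hmxlast : mx s1 = c s1 := by
    rw [hmxdef]; simp only; rw [Finset.Icc_self, Finset.sup_singleton]
  have hmxstep : ∀ k, k < s1 → mx k = max (c k) (mx (k+1)) := by
    intro k hk
    have hins : Finset.Icc k s1 = insert k (Finset.Icc (k+1) s1) := by
      ext m; simp only [Finset.mem_Icc, Finset.mem_insert]; omega
    rw [hmxdef]; simp only
    rw [hins, Finset.sup_insert]
  -- the records after position a
  set R : ℕ → Finset ℕ := fun a => (Finset.Ico a s1).filter (fun k => mx (k+1) < c k)
    with hRdef
  have hRmem : ∀ a k, k ∈ R a ↔ (a ≤ k ∧ k < s1 ∧ mx (k+1) < c k) := by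
    intro a k
    rw [hRdef]; simp only
    rw [Finset.mem_filter, Finset.mem_Ico]
    tauto
  have hcount : ∀ m a, a + m = s1 → mx a ≤ c s1 + 2 * L * (R a).card := by
    intro m
    induction m with
    | zero =>
      intro a ha
      rw [show a = s1 by omega, hmxlast]
      exact Nat.le_add_right _ _
    | succ m ih =>
      intro a ha
      have ihh := ih (a+1) (by omega)
      have hRsub : R (a+1) ⊆ R a := by
        intro b hb
        rw [hRmem] at hb ⊢
        exact ⟨by omega, hb.2.1, hb.2.2⟩
      have hmono : 2 * L * (R (a+1)).card ≤ 2 * L * (R a).card :=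
        Nat.mul_le_mul_left _ (Finset.card_le_card hRsub)
      have hcak : c a ≤ max (c (a+1)) K0 + 2 * L := hca a (by omega)
      have hk0 : K0 < c (a+1) := hseg (a+1) (by omega)
      have hcmx : c (a+1) ≤ mx (a+1) := hmxge (a+1) (a+1) (le_refl _) (by omega)
      rw [hmxstep a (by omega)]
      by_cases hrec : mx (a+1) < c a
      · have hmemr : a ∈ R a := (hRmem a a).mpr ⟨le_refl a, by omega, hrec⟩
        have hnot : a ∉ R (a+1) := by
          intro h; have := (hRmem (a+1) a).mp h; omega
        have hcard : (R (a+1)).card + 1 ≤ (R a).card := by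
          have hsub2 : insert a (R (a+1)) ⊆ R a := by
            intro b hb
            rcases Finset.mem_insert.mp hb with rfl | hb
            · exact hmemr
            · exact hRsub hb
          calc (R (a+1)).card + 1 = (insert a (R (a+1))).card :=
                (Finset.card_insert_of_notMem hnot).symm
          _ ≤ (R a).card := Finset.card_le_card hsub2
        have hmul : 2 * L * ((R (a+1)).card + 1) ≤ 2 * L * (R a).card :=
          Nat.mul_le_mul_left _ hcard
        have hdist : 2 * L * ((R (a+1)).card + 1) = 2 * L * (R (a+1)).card + 2 * L := by
          ring
        apply max_le
        · omega
        · omega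
      · apply max_le
        · omega
        · omega
  -- no pumpable pair, or the pump
  by_cases hpump : ∃ j j', j < j' ∧ j' ≤ s1 ∧ qs j = qs j' ∧ ctxs j = ctxs j' ∧ c j' < c j
  · -- THE PUMP
    obtain ⟨j, j', hjj, hj's, hqq, hctxeq, hlt⟩ := hpump
    set Δ := c j - c j' with hΔdef
    refine ⟨qs j', ?_⟩
    have hj'n : j' ≤ n := by omega
    have key : ∀ m : ℕ, Der A (qs j') (Ctx.fill (ctxs j') (c j' + m * Δ)) := by
      intro m
      induction m with
      | zero =>
        rw [Nat.zero_mul, Nat.add_zero, hfill j' hj'n]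
        exact chain_der hstep hdn j' hj'n
      | succ m ih =>
        have up : ∀ d k, k + d = j' → j ≤ k →
            Der A (qs k) (Ctx.fill (ctxs k) (c k + m * Δ)) := by
          intro d
          induction d with
          | zero =>
            intro k hk _
            rw [show k = j' by omega]
            exact ih
          | succ d ihd =>
            intro k hk hjk
            have h2 := ihd (k+1) (by omega) (by omega)
            have hkn : k < n := by omega
            have hEq := (step_main (hgM k hkn) (hupL k hkn) (le_max_left M L)
              (le_max_right M L) (hWP k hkn) (hseg k (by omega))
              (hseg (k+1) (by omega))).2.2 (m * Δ)
            obtain ⟨ht, hsrc, htgt, _⟩ := hstep k hkn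
            rw [← hsrc, ← hEq]
            exact Der.step ht (htgt ▸ h2)
        have h3 := up (j' - j) j (by omega) (le_refl j)
        rw [hqq, hctxeq] at h3
        have h4 : c j + m * Δ = c j' + (m + 1) * Δ := by
          rw [Nat.succ_mul]; omega
        rwa [h4] at h3
    have hinj : Function.Injective (fun m : ℕ => Ctx.fill (ctxs j') (c j' + m * Δ)) := by
      intro m1 m2 h
      have h2 := (fill_inj h).2
      have hΔpos : 0 < Δ := by omega
      have : m1 * Δ = m2 * Δ := by omega
      exact Nat.eq_of_mul_eq_mul_right hΔpos this
    exact Set.infinite_of_injective_forall_mem hinj (fun m => key m)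
  · -- NO PUMP: bound the constant, contradiction
    exfalso
    push_neg at hpump
    -- family is constant along the segment
    have hfam : ∀ k, k ≤ s1 → cfam (ctxs k) = cfam (ctxs 0) := by
      intro k
      induction k with
      | zero => intro _; rfl
      | succ k ih =>
        intro hk
        have h := (step_main (hgM k (by omega)) (hupL k (by omega)) (le_max_left M L)
          (le_max_right M L) (hWP k (by omega)) (hseg k (by omega))
          (hseg (k+1) (by omega))).1
        rw [h]; exact ih (by omega)
    -- diagonality propagates upward (deeper)
    have hdiag1 : ∀ k, k + 1 ≤ s1 → cdiag (ctxs k) = true → cdiag (ctxs (k+1)) = true := by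
      intro k hk
      exact (step_main (hgM k (by omega)) (hupL k (by omega)) (le_max_left M L)
        (le_max_right M L) (hWP k (by omega)) (hseg k (by omega))
        (hseg (k+1) (by omega))).2.1
    have hdiag : ∀ d k, k + d ≤ s1 → cdiag (ctxs k) = true →
        cdiag (ctxs (k + d)) = true := by
      intro d
      induction d with
      | zero => intro k _ h; exact h
      | succ d ih =>
        intro k hk h
        have h1 := ih k (by omega) h
        have h2 := hdiag1 (k + d) (by omega) h1
        exact h2
    -- distinct classes among records (and s1)
    have hdst : ∀ k k', k < k' → k' ≤ s1 → mx (k+1) < c k →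
        ¬ (qs k = qs k' ∧ ctxs k = ctxs k') := by
      intro k k' h1 h2 h3 ⟨hq', hctx'⟩
      have hck' : c k' ≤ mx (k+1) := hmxge (k+1) k' (by omega) h2
      have := hpump k k' h1 h2 hq' hctx'
      omega
    by_cases heqd : ∃ k, k ≤ s1 ∧ ceqd (ctxs k)
    · -- an equal-diagonal context occurs
      obtain ⟨ke, hke, hkeP⟩ := heqd
      set k0 := Nat.findGreatest (fun k => ceqd (ctxs k)) s1 with hk0def
      have hk0P : ceqd (ctxs k0) := by
        have h := Nat.findGreatest_spec (P := fun k => ceqd (ctxs k)) hke hkeP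
        exact hk0def ▸ h
      have hk0le : k0 ≤ s1 := Nat.findGreatest_le s1
      have hmaxk0 : ∀ jj, k0 < jj → jj ≤ s1 → ¬ ceqd (ctxs jj) := by
        intro jj h1 h2
        exact Nat.findGreatest_is_greatest h1 h2
      have hfz : ∀ d jj, jj + d = k0 → ceqd (ctxs jj) ∧ c jj = c k0 := by
        intro d
        induction d with
        | zero => intro jj hjj; rw [show jj = k0 by omega]; exact ⟨hk0P, rfl⟩
        | succ d ih =>
          intro jj hjj
          have h2 := ih (jj+1) (by omega)
          have hse := step_eqdiag (hWP jj (by omega)) h2.1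
          exact ⟨hse.1, by rw [hse.2, h2.2]⟩
      have hc0k0 : c 0 = c k0 := (hfz k0 0 (by omega)).2
      by_cases hk0s : k0 = s1
      · -- frozen all the way: c 0 small
        rw [hk0s] at hc0k0
        have h2L : 2 * L ≤ 2 * L * N := Nat.le_mul_of_pos_right _ (by omega)
        omega
      · -- records in (k0, s1] are non-equal diagonal contexts
        have hk0lt : k0 < s1 := by omega
        set S := insert s1 (R (k0+1)) with hSdef
        have hSmem : ∀ k, k ∈ S → k0 < k ∧ k ≤ s1 := by
          intro k hk
          rcases Finset.mem_insert.mp hk with rfl | hk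
          · omega
          · have := (hRmem (k0+1) k).mp hk; omega
        have hSdiag : ∀ k, k ∈ S → cdiag (ctxs k) = true := by
          intro k hk
          have h1 := hSmem k hk
          have h2 := hdiag (k - k0) k0 (by omega) (cdiag_of_ceqd hk0P)
          rwa [show k0 + (k - k0) = k by omega] at h2
        have hSne : ∀ k, k ∈ S → ¬ ceqd (ctxs k) := by
          intro k hk
          have h1 := hSmem k hk
          exact hmaxk0 k h1.1 h1.2
        have hSnz : ∀ k, k ∈ S → (encCtx (ctxs k)).1 ≠ (encCtx (ctxs k)).2 :=
          fun k hk => ne_of_cdiag (hSdiag k hk) (hSne k hk)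
        have hs1S : s1 ∈ S := Finset.mem_insert_self _ _
        set w0 : {p : X × X // p.1 ≠ p.2} := ⟨encCtx (ctxs s1), hSnz s1 hs1S⟩ with hw0def
        set F : ℕ → Q × {p : X × X // p.1 ≠ p.2} := fun k =>
          (qs k, if h : (encCtx (ctxs k)).1 ≠ (encCtx (ctxs k)).2
            then ⟨encCtx (ctxs k), h⟩ else w0) with hFdef
        have hFinj : Set.InjOn F S := by
          intro k hk k' hk' hFeq
          by_contra hne
          have hneq : encCtx (ctxs k) = encCtx (ctxs k') ∧ qs k = qs k' := by
            rw [hFdef] at hFeq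
            simp only [dif_pos (hSnz k hk), dif_pos (hSnz k' hk')] at hFeq
            exact ⟨congrArg (fun p => (p.2 : X × X)) hFeq, congrArg Prod.fst hFeq⟩
          have hctxeq : ctxs k = ctxs k' := by
            apply encCtx_inj _ (hSne k hk) (hSne k' hk') hneq.1
            rw [hfam k (hSmem k hk).2, hfam k' (hSmem k' hk').2]
          rcases lt_trichotomy k k' with h | h | h
          · have hkR : k ∈ R (k0+1) := by
              rcases Finset.mem_insert.mp hk with rfl | hkk
              · exfalso; have := hSmem k' hk'; omega
              · exact hkk
            have := (hRmem (k0+1) k).mp hkR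
            exact hdst k k' h (hSmem k' hk').2 this.2.2 ⟨hneq.2, hctxeq⟩
          · exact hne h
          · have hkR : k' ∈ R (k0+1) := by
              rcases Finset.mem_insert.mp hk' with rfl | hkk
              · exfalso; have := hSmem k hk; omega
              · exact hkk
            have := (hRmem (k0+1) k').mp hkR
            exact hdst k' k h (hSmem k hk).2 this.2.2 ⟨hneq.2.symm, hctxeq.symm⟩
        have hcard1 : S.card ≤ cQ * (cX * cX - cX) := by
          have h1 := Finset.card_le_card_of_injOn F (fun k _ => Finset.mem_univ (F k)) hFinj
          rw [Finset.card_univ] at h1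
          have e : {p : X × X // p.1 = p.2} ≃ X :=
            { toFun := fun p => p.1.1
              invFun := fun x => ⟨(x, x), rfl⟩
              left_inv := by rintro ⟨⟨a, b⟩, h⟩; simp only at h; subst h; rfl
              right_inv := fun x => rfl }
          have hc2 : Fintype.card {p : X × X // p.1 ≠ p.2} = cX * cX - cX := by
            simp only [ne_eq]
            rw [Fintype.card_subtype_compl, Fintype.card_prod, Fintype.card_congr e]
          have hc3 : Fintype.card (Q × {p : X × X // p.1 ≠ p.2}) = cQ * (cX * cX - cX) := by
            rw [Fintype.card_prod, hc2]
          rw [hc3] at h1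
          exact h1
        have hs1notR : s1 ∉ R (k0+1) := by
          intro h; have := (hRmem (k0+1) s1).mp h; omega
        have hScard : (R (k0+1)).card + 1 = S.card := by
          rw [hSdef, Finset.card_insert_of_notMem hs1notR]
        -- arithmetic
        have hcnt := hcount (s1 - (k0+1)) (k0+1) (by omega)
        have hcmx : c (k0+1) ≤ mx (k0+1) := hmxge (k0+1) (k0+1) (le_refl _) (by omega)
        have hck0 : c k0 ≤ max (c (k0+1)) K0 + 2 * L := hca k0 (by omega)
        have hk01 : K0 < c (k0+1) := hseg (k0+1) (by omega)
        -- r + 2 ≤ N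
        have hsub : cX * cX - cX + cX = cX * cX :=
          Nat.sub_add_cancel (Nat.le_mul_of_pos_left cX (by omega))
        have hNsplit : cQ * (cX * cX - cX) + cQ * cX = N := by
          rw [hNdef, ← Nat.mul_add, hsub]
        have hQX : 1 ≤ cQ * cX := Nat.mul_pos (by omega) (by omega)
        have hrN : (R (k0+1)).card + 2 ≤ N := by omega
        have hmul : 2 * L * ((R (k0+1)).card + 2) ≤ 2 * L * N :=
          Nat.mul_le_mul_left _ hrN
        have hdist : 2 * L * ((R (k0+1)).card + 2) =
            2 * L * (R (k0+1)).card + 2 * L + 2 * L := by ring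
        omega
    · -- no equal-diagonal context at all
      push_neg at heqd
      set S := insert s1 (R 0) with hSdef
      have hSmem : ∀ k, k ∈ S → k ≤ s1 := by
        intro k hk
        rcases Finset.mem_insert.mp hk with rfl | hk
        · omega
        · have := (hRmem 0 k).mp hk; omega
      set F : ℕ → Q × (X × X) := fun k => (qs k, encCtx (ctxs k)) with hFdef
      have hFinj : Set.InjOn F S := by
        intro k hk k' hk' hFeq
        by_contra hne
        have hneq : encCtx (ctxs k) = encCtx (ctxs k') ∧ qs k = qs k' := by
          rw [hFdef] at hFeq
          exact ⟨congrArg Prod.snd hFeq, congrArg Prod.fst hFeq⟩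
        have hctxeq : ctxs k = ctxs k' := by
          apply encCtx_inj _ (heqd k (hSmem k hk)) (heqd k' (hSmem k' hk')) hneq.1
          rw [hfam k (hSmem k hk), hfam k' (hSmem k' hk')]
        rcases lt_trichotomy k k' with h | h | h
        · have hkR : k ∈ R 0 := by
            rcases Finset.mem_insert.mp hk with rfl | hkk
            · exfalso; have := hSmem k' hk'; omega
            · exact hkk
          have := (hRmem 0 k).mp hkR
          exact hdst k k' h (hSmem k' hk') this.2.2 ⟨hneq.2, hctxeq⟩
        · exact hne h
        · have hkR : k' ∈ R 0 := by
            rcases Finset.mem_insert.mp hk' with rfl | hkk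
            · exfalso; have := hSmem k hk; omega
            · exact hkk
          have := (hRmem 0 k').mp hkR
          exact hdst k' k h (hSmem k hk) this.2.2 ⟨hneq.2.symm, hctxeq.symm⟩
      have hcard1 : S.card ≤ N := by
        have h1 := Finset.card_le_card_of_injOn F (fun k _ => Finset.mem_univ (F k)) hFinj
        rw [Finset.card_univ] at h1
        rw [Fintype.card_prod, Fintype.card_prod] at h1
        rw [hNdef]
        exact h1
      have hs1notR : s1 ∉ R 0 := by
        intro h; have := (hRmem 0 s1).mp h; omega
      have hScard : (R 0).card + 1 = S.card := by
        rw [hSdef, Finset.card_insert_of_notMem hs1notR]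
      have hcnt := hcount s1 0 (by omega)
      have hcmx : c 0 ≤ mx 0 := hmxge 0 0 (le_refl _) (by omega)
      have hmul : 2 * L * ((R 0).card + 1) ≤ 2 * L * N :=
        Nat.mul_le_mul_left _ (by omega)
      have hdist : 2 * L * ((R 0).card + 1) = 2 * L * (R 0).card + 2 * L := by ring
      omega

end Stmt14

/-- Proposition `termination-large-constant`. For a UTA whose
guards use only weak inequalities, the smallest reduced G-map is infinite at some
state iff it contains, at some state, a constraint whose constant exceeds
`max(M,L) + 2·L·|Q|·|X|²`. -/
theorem stmt14 {Q X : Type} [Fintype Q] [Fintype X] (A : UTA Q X)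
    (hw : weakGuards A) :
    (∃ q, ¬ (minRedGMap A q).Finite) ↔
    (∃ q φ, φ ∈ minRedGMap A q ∧
        max (maxGuardConst A) (maxUpdateConst A) +
          2 * maxUpdateConst A * Fintype.card Q * Fintype.card X ^ 2 < AC.cst φ) := by
  rw [Stmt14.minRedGMap_eq]
  simp only [Set.mem_setOf_eq]
  constructor
  · rintro ⟨q, hq⟩
    by_contra hcon
    push_neg at hcon
    apply hq
    apply Set.Finite.subset (Stmt14.finite_cst_le (max (maxGuardConst A) (maxUpdateConst A) +
      2 * maxUpdateConst A * Fintype.card Q * Fintype.card X ^ 2))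
    intro ψ hψ
    exact hcon q ψ hψ
  · rintro ⟨q, φ, hmem, hbig⟩
    exact Stmt14.backward A hw hmem hbig
end

section
/- Let A be a UTA all of whose atomic constraints in guards use the weak inequality ≤, M the maximum constant in its guards, and L the maximum absolute value of a constant in its updates (0 if none). Let (q₀, ctx₀[c₀]) → (q₁, ctx₁[c₁]) → ⋯ → (q_n, ctx_n[c_n]) be a propagation sequence with c₀ ≤ max(M, L) and c_n > max(M, L) + 2·L·|Q|·|X|². Then there exist indices 0 < i < j ≤ n such that (q_i, ctx_i) = (q_j, ctx_j), c_i < c_j, and c_k > max(M, L) for all i ≤ k ≤ j. -/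
open Classical

section Aux
variable {Q X : Type}

/-- kind of a context: 0 = upper, 1 = lower, 2 = dUpper, 3 = dLower -/
def ck : Ctx X → ℕ
  | .upper _ => 0
  | .lower _ => 1
  | .dUpper _ _ => 2
  | .dLower _ _ => 3

/-- the context is a diagonal with equal clocks -/
def eqd : Ctx X → Prop
  | .dUpper x y => x = y
  | .dLower x y => x = y
  | _ => False

def cclocks : Ctx X → X × X
  | .upper x => (x, x)
  | .lower x => (x, x)
  | .dUpper x y => (x, y)
  | .dLower x y => (x, y)

lemma eqd_ck {ctx : Ctx X} (h : eqd ctx) : 2 ≤ ck ctx := by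
  cases ctx <;> simp [eqd, ck] at h ⊢

lemma ck_cases (ctx : Ctx X) : ck ctx = 0 ∨ ck ctx = 1 ∨ ck ctx = 2 ∨ ck ctx = 3 := by
  cases ctx <;> simp [ck]

lemma fill_ne_tt (ctx : Ctx X) (c : ℕ) : Ctx.fill ctx c ≠ AC.tt := by
  cases ctx <;> simp [Ctx.fill]

lemma fill_ne_ff (ctx : Ctx X) (c : ℕ) : Ctx.fill ctx c ≠ AC.ff := by
  cases ctx <;> simp [Ctx.fill]

variable {up : Update X} {g : Guard X} {φ : AC X}

lemma wp_tt (h : upInvA up φ = AC.tt) : wp φ g up = AC.tt := by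
  unfold wp; rw [h]

lemma wp_ff (h : upInvA up φ = AC.ff) : wp φ g up = AC.ff := by
  unfold wp; rw [h]

lemma wp_upper {x o d} (h : upInvA up φ = AC.upper x o d) :
    wp φ g up = if hasUpperG g x then AC.tt else AC.upper x o d := by
  unfold wp; rw [h]

lemma wp_lower {x o d} (h : upInvA up φ = AC.lower d o x) :
    wp φ g up = if hasUpperG g x ∧ minUpperG g x < d then AC.lower (minUpperG g x) .le x
      else AC.lower d o x := by
  unfold wp; rw [h]

lemma wp_dUpper {x y o d} (h : upInvA up φ = AC.dUpper x y o d) :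
    wp φ g up = if case3G g x y d then AC.tt else AC.dUpper x y o d := by
  unfold wp; rw [h]

lemma wp_dLower {x y o d} (h : upInvA up φ = AC.dLower d o x y) :
    wp φ g up = if case3G g x y d then AC.tt else AC.dLower d o x y := by
  unfold wp; rw [h]

end Aux
section Aux2
variable {Q X : Type}

lemma le_foldr_max {l : List ℕ} {a : ℕ} (h : a ∈ l) : a ≤ l.foldr max 0 := by
  induction l with
  | nil => simp at h
  | cons b t ih =>
    simp only [List.foldr_cons]
    rcases List.mem_cons.mp h with rfl | h
    · omega
    · have := ih h; omega

lemma guard_cst_le (A : UTA Q X) {t : UTrans Q X} (ht : t ∈ A.trans) {φ : AC X}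
    (hφ : φ ∈ t.guard) : AC.cst φ ≤ maxGuardConst A := by
  have h1 : AC.cst φ ≤ (t.guard.map AC.cst).foldr max 0 :=
    le_foldr_max (List.mem_map.mpr ⟨φ, hφ, rfl⟩)
  have h2 : (t.guard.map AC.cst).foldr max 0 ≤ maxGuardConst A :=
    le_foldr_max (List.mem_map.mpr ⟨t, ht, rfl⟩)
  omega

lemma update_cst_le [Fintype X] (A : UTA Q X) {t : UTrans Q X} (ht : t ∈ A.trans) (x : X) :
    Rhs.cst (t.update x) ≤ maxUpdateConst A := by
  have h1 : Rhs.cst (t.update x) ≤ Finset.univ.sup fun z => Rhs.cst (t.update z) :=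
    Finset.le_sup (f := fun z => Rhs.cst (t.update z)) (Finset.mem_univ x)
  have h2 : (Finset.univ.sup fun z => Rhs.cst (t.update z)) ≤ maxUpdateConst A :=
    le_foldr_max (List.mem_map.mpr ⟨t, ht, rfl⟩)
  omega

lemma minUpperG_le {g : Guard X} {x : X} {M : ℕ} (hg : ∀ φ ∈ g, AC.cst φ ≤ M)
    (h : hasUpperG g x) : minUpperG g x ≤ M := by
  obtain ⟨o, c, hmem⟩ := h
  have h1 : minUpperG g x ≤ c := Nat.sInf_le ⟨o, hmem⟩
  exact le_trans h1 (by simpa [AC.cst] using hg _ hmem)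

end Aux2
section Step
variable {X : Type} {g : Guard X} {up : Update X} {M L : ℕ} {ctx' : Ctx X} {c c' : ℕ}

lemma step0 (hg : ∀ φ ∈ g, AC.cst φ ≤ M) (hup : ∀ z, Rhs.cst (up z) ≤ L)
    (hc' : max M L < c') {x : X}
    (h : Ctx.fill ctx' c' = wp (AC.upper x .le c) g up) :
    ck ctx' = 0 ∧ c' ≤ c + L := by
  rcases hux : up x with a | ⟨y, d⟩
  · have hinv : upInvA up (AC.upper x .le c) =
        if Ineq.le.holds (a : ℝ) (c : ℝ) then AC.tt else AC.ff := by
      simp [upInvA, hux]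
    by_cases hab : Ineq.le.holds (a : ℝ) (c : ℝ)
    · rw [if_pos hab] at hinv
      rw [wp_tt hinv] at h
      exact absurd h (fill_ne_tt _ _)
    · rw [if_neg hab] at hinv
      rw [wp_ff hinv] at h
      exact absurd h (fill_ne_ff _ _)
  · have hd : d.natAbs ≤ L := by have := hup x; rw [hux] at this; exact this
    by_cases hneg : (c : ℤ) - d < 0
    · have hinv : upInvA up (AC.upper x .le c) = AC.ff := by
        simp [upInvA, hux, hneg]
      rw [wp_ff hinv] at h
      exact absurd h (fill_ne_ff _ _)
    · have hinv : upInvA up (AC.upper x .le c) = AC.upper y .le ((c : ℤ) - d).toNat := by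
        simp [upInvA, hux, hneg]
      rw [wp_upper hinv] at h
      by_cases hu : hasUpperG g y
      · rw [if_pos hu] at h
        exact absurd h (fill_ne_tt _ _)
      · rw [if_neg hu] at h
        cases ctx' <;> simp [Ctx.fill] at h
        obtain ⟨rfl, h2⟩ := h
        constructor
        · rfl
        · omega

end Step
section Step2
variable {X : Type} {g : Guard X} {up : Update X} {M L : ℕ} {ctx' : Ctx X} {c c' : ℕ}

lemma step1 (hg : ∀ φ ∈ g, AC.cst φ ≤ M) (hup : ∀ z, Rhs.cst (up z) ≤ L)
    (hc' : max M L < c') {x : X}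
    (h : Ctx.fill ctx' c' = wp (AC.lower c .le x) g up) :
    ck ctx' = 1 ∧ c' ≤ c + L := by
  rcases hux : up x with a | ⟨y, d⟩
  · have hinv : upInvA up (AC.lower c .le x) =
        if Ineq.le.holds (c : ℝ) (a : ℝ) then AC.tt else AC.ff := by
      simp [upInvA, hux]
    by_cases hab : Ineq.le.holds (c : ℝ) (a : ℝ)
    · rw [if_pos hab] at hinv; rw [wp_tt hinv] at h; exact absurd h (fill_ne_tt _ _)
    · rw [if_neg hab] at hinv; rw [wp_ff hinv] at h; exact absurd h (fill_ne_ff _ _)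
  · have hd : d.natAbs ≤ L := by have := hup x; rw [hux] at this; exact this
    by_cases hneg : (c : ℤ) - d < 0
    · have hinv : upInvA up (AC.lower c .le x) = AC.tt := by
        simp [upInvA, hux, hneg]
      rw [wp_tt hinv] at h; exact absurd h (fill_ne_tt _ _)
    · have hinv : upInvA up (AC.lower c .le x) = AC.lower ((c : ℤ) - d).toNat .le y := by
        simp [upInvA, hux, hneg]
      rw [wp_lower hinv] at h
      by_cases hu : hasUpperG g y ∧ minUpperG g y < ((c : ℤ) - d).toNat
      · rw [if_pos hu] at h
        have hmle : minUpperG g y ≤ M := minUpperG_le hg hu.1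
        cases ctx' <;> simp [Ctx.fill] at h
        omega
      · rw [if_neg hu] at h
        cases ctx' <;> simp [Ctx.fill] at h
        obtain ⟨h2, rfl⟩ := h
        exact ⟨rfl, by omega⟩

end Step2
section Step3
variable {X : Type} {g : Guard X} {up : Update X} {M L : ℕ} {ctx' : Ctx X} {c c' : ℕ}

lemma step2 (hg : ∀ φ ∈ g, AC.cst φ ≤ M) (hup : ∀ z, Rhs.cst (up z) ≤ L)
    (hc' : max M L < c') {x y : X}
    (h : Ctx.fill ctx' c' = wp (AC.dUpper x y .le c) g up) :
    c' ≤ c + 2 * L ∧ (ck ctx' = 3 → c + c' ≤ 2 * L) ∧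
      (x = y → eqd ctx' ∧ ck ctx' = 2 ∧ c' = c) := by
  rcases hux : up x with a | ⟨z, e⟩ <;> rcases huy : up y with b | ⟨w, f⟩
  · -- const, const
    have hinv : upInvA up (AC.dUpper x y .le c) =
        if Ineq.le.holds ((a : ℝ) - (b : ℝ)) (c : ℝ) then AC.tt else AC.ff := by
      simp [upInvA, hux, huy]
    by_cases hab : Ineq.le.holds ((a : ℝ) - (b : ℝ)) (c : ℝ)
    · rw [if_pos hab] at hinv; rw [wp_tt hinv] at h; exact absurd h (fill_ne_tt _ _)
    · rw [if_neg hab] at hinv; rw [wp_ff hinv] at h; exact absurd h (fill_ne_ff _ _)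
  · -- const a, clock w f
    have ha : a ≤ L := by have := hup x; rw [hux] at this; exact this
    have hf : f.natAbs ≤ L := by have := hup y; rw [huy] at this; exact this
    by_cases hneg : (a : ℤ) - f - (c : ℤ) < 0
    · have hinv : upInvA up (AC.dUpper x y .le c) = AC.tt := by
        simp [upInvA, hux, huy, hneg]
      rw [wp_tt hinv] at h; exact absurd h (fill_ne_tt _ _)
    · have hinv : upInvA up (AC.dUpper x y .le c) =
          AC.lower ((a : ℤ) - f - (c : ℤ)).toNat .le w := by
        simp [upInvA, hux, huy, hneg]
      rw [wp_lower hinv] at h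
      by_cases hu : hasUpperG g w ∧ minUpperG g w < ((a : ℤ) - f - (c : ℤ)).toNat
      · rw [if_pos hu] at h
        have hmle : minUpperG g w ≤ M := minUpperG_le hg hu.1
        cases ctx' <;> simp [Ctx.fill] at h
        omega
      · rw [if_neg hu] at h
        cases ctx' <;> simp [Ctx.fill] at h
        obtain ⟨h2, rfl⟩ := h
        refine ⟨by omega, by simp [ck], ?_⟩
        rintro rfl
        rw [hux] at huy
        exact absurd huy (by simp)
  · -- clock z e, const b
    have hb : b ≤ L := by have := hup y; rw [huy] at this; exact this
    have he : e.natAbs ≤ L := by have := hup x; rw [hux] at this; exact this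
    by_cases hneg : (c : ℤ) + (b : ℤ) - e < 0
    · have hinv : upInvA up (AC.dUpper x y .le c) = AC.ff := by
        simp [upInvA, hux, huy, hneg]
      rw [wp_ff hinv] at h; exact absurd h (fill_ne_ff _ _)
    · have hinv : upInvA up (AC.dUpper x y .le c) =
          AC.upper z .le ((c : ℤ) + (b : ℤ) - e).toNat := by
        simp [upInvA, hux, huy, hneg]
      rw [wp_upper hinv] at h
      by_cases hu : hasUpperG g z
      · rw [if_pos hu] at h; exact absurd h (fill_ne_tt _ _)
      · rw [if_neg hu] at h
        cases ctx' <;> simp [Ctx.fill] at h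
        obtain ⟨rfl, h2⟩ := h
        refine ⟨by omega, by simp [ck], ?_⟩
        rintro rfl
        rw [hux] at huy
        exact absurd huy (by simp)
  · -- clock z e, clock w f
    have he : e.natAbs ≤ L := by have := hup x; rw [hux] at this; exact this
    have hf : f.natAbs ≤ L := by have := hup y; rw [huy] at this; exact this
    by_cases hneg : (c : ℤ) - e + f < 0
    · have hinv : upInvA up (AC.dUpper x y .le c) =
          AC.dLower (-((c : ℤ) - e + f)).toNat .le w z := by
        simp [upInvA, hux, huy, hneg]
      rw [wp_dLower hinv] at h
      by_cases hcg : case3G g w z (-((c : ℤ) - e + f)).toNat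
      · rw [if_pos hcg] at h; exact absurd h (fill_ne_tt _ _)
      · rw [if_neg hcg] at h
        cases ctx' <;> simp [Ctx.fill] at h
        obtain ⟨h2, rfl, rfl⟩ := h
        refine ⟨by omega, fun _ => by omega, ?_⟩
        rintro rfl
        rw [hux] at huy
        injection huy with h3 h4
        omega
    · have hinv : upInvA up (AC.dUpper x y .le c) =
          AC.dUpper z w .le ((c : ℤ) - e + f).toNat := by
        simp [upInvA, hux, huy, hneg]
      rw [wp_dUpper hinv] at h
      by_cases hcg : case3G g z w ((c : ℤ) - e + f).toNat
      · rw [if_pos hcg] at h; exact absurd h (fill_ne_tt _ _)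
      · rw [if_neg hcg] at h
        cases ctx' <;> simp [Ctx.fill] at h
        obtain ⟨rfl, rfl, h2⟩ := h
        refine ⟨by omega, by simp [ck], ?_⟩
        rintro rfl
        rw [hux] at huy
        injection huy with h3 h4
        exact ⟨by simpa [eqd] using h3, rfl, by omega⟩

end Step3
section Step4
variable {X : Type} {g : Guard X} {up : Update X} {M L : ℕ} {ctx' : Ctx X} {c c' : ℕ}

lemma step3 (hg : ∀ φ ∈ g, AC.cst φ ≤ M) (hup : ∀ z, Rhs.cst (up z) ≤ L)
    (hc' : max M L < c') {x y : X}
    (h : Ctx.fill ctx' c' = wp (AC.dLower c .le x y) g up) :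
    c' ≤ c + 2 * L ∧ (ck ctx' = 2 → c + c' ≤ 2 * L) ∧
      (x = y → eqd ctx' ∧ ck ctx' = 3 ∧ c' = c) := by
  rcases hux : up x with a | ⟨z, e⟩ <;> rcases huy : up y with b | ⟨w, f⟩
  · have hinv : upInvA up (AC.dLower c .le x y) =
        if Ineq.le.holds (c : ℝ) ((a : ℝ) - (b : ℝ)) then AC.tt else AC.ff := by
      simp [upInvA, hux, huy]
    by_cases hab : Ineq.le.holds (c : ℝ) ((a : ℝ) - (b : ℝ))
    · rw [if_pos hab] at hinv; rw [wp_tt hinv] at h; exact absurd h (fill_ne_tt _ _)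
    · rw [if_neg hab] at hinv; rw [wp_ff hinv] at h; exact absurd h (fill_ne_ff _ _)
  · -- const a, clock w f
    have ha : a ≤ L := by have := hup x; rw [hux] at this; exact this
    have hf : f.natAbs ≤ L := by have := hup y; rw [huy] at this; exact this
    by_cases hneg : (a : ℤ) - f - (c : ℤ) < 0
    · have hinv : upInvA up (AC.dLower c .le x y) = AC.ff := by
        simp [upInvA, hux, huy, hneg]
      rw [wp_ff hinv] at h; exact absurd h (fill_ne_ff _ _)
    · have hinv : upInvA up (AC.dLower c .le x y) =
          AC.upper w .le ((a : ℤ) - f - (c : ℤ)).toNat := by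
        simp [upInvA, hux, huy, hneg]
      rw [wp_upper hinv] at h
      by_cases hu : hasUpperG g w
      · rw [if_pos hu] at h; exact absurd h (fill_ne_tt _ _)
      · rw [if_neg hu] at h
        cases ctx' <;> simp [Ctx.fill] at h
        obtain ⟨rfl, h2⟩ := h
        refine ⟨by omega, by simp [ck], ?_⟩
        rintro rfl
        rw [hux] at huy
        exact absurd huy (by simp)
  · -- clock z e, const b
    have hb : b ≤ L := by have := hup y; rw [huy] at this; exact this
    have he : e.natAbs ≤ L := by have := hup x; rw [hux] at this; exact this
    by_cases hneg : (c : ℤ) + (b : ℤ) - e < 0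
    · have hinv : upInvA up (AC.dLower c .le x y) = AC.tt := by
        simp [upInvA, hux, huy, hneg]
      rw [wp_tt hinv] at h; exact absurd h (fill_ne_tt _ _)
    · have hinv : upInvA up (AC.dLower c .le x y) =
          AC.lower ((c : ℤ) + (b : ℤ) - e).toNat .le z := by
        simp [upInvA, hux, huy, hneg]
      rw [wp_lower hinv] at h
      by_cases hu : hasUpperG g z ∧ minUpperG g z < ((c : ℤ) + (b : ℤ) - e).toNat
      · rw [if_pos hu] at h
        have hmle : minUpperG g z ≤ M := minUpperG_le hg hu.1
        cases ctx' <;> simp [Ctx.fill] at h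
        omega
      · rw [if_neg hu] at h
        cases ctx' <;> simp [Ctx.fill] at h
        obtain ⟨h2, rfl⟩ := h
        refine ⟨by omega, by simp [ck], ?_⟩
        rintro rfl
        rw [hux] at huy
        exact absurd huy (by simp)
  · -- clock z e, clock w f
    have he : e.natAbs ≤ L := by have := hup x; rw [hux] at this; exact this
    have hf : f.natAbs ≤ L := by have := hup y; rw [huy] at this; exact this
    by_cases hneg : (c : ℤ) - e + f < 0
    · have hinv : upInvA up (AC.dLower c .le x y) =
          AC.dUpper w z .le (-((c : ℤ) - e + f)).toNat := by
        simp [upInvA, hux, huy, hneg]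
      rw [wp_dUpper hinv] at h
      by_cases hcg : case3G g w z (-((c : ℤ) - e + f)).toNat
      · rw [if_pos hcg] at h; exact absurd h (fill_ne_tt _ _)
      · rw [if_neg hcg] at h
        cases ctx' <;> simp [Ctx.fill] at h
        obtain ⟨rfl, rfl, h2⟩ := h
        refine ⟨by omega, fun _ => by omega, ?_⟩
        rintro rfl
        rw [hux] at huy
        injection huy with h3 h4
        omega
    · have hinv : upInvA up (AC.dLower c .le x y) =
          AC.dLower ((c : ℤ) - e + f).toNat .le z w := by
        simp [upInvA, hux, huy, hneg]
      rw [wp_dLower hinv] at h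
      by_cases hcg : case3G g z w ((c : ℤ) - e + f).toNat
      · rw [if_pos hcg] at h; exact absurd h (fill_ne_tt _ _)
      · rw [if_neg hcg] at h
        cases ctx' <;> simp [Ctx.fill] at h
        obtain ⟨h2, rfl, rfl⟩ := h
        refine ⟨by omega, by simp [ck], ?_⟩
        rintro rfl
        rw [hux] at huy
        injection huy with h3 h4
        exact ⟨by simpa [eqd] using h3, rfl, by omega⟩

end Step4
section Sets
variable {Q X : Type}

/-- combined consequences of one propagation step with large target constant -/
def StepFacts {X : Type} (L : ℕ) (ctx : Ctx X) (c : ℕ) (ctx' : Ctx X) (c' : ℕ) : Prop :=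
  (ck ctx ≤ 1 → ck ctx' = ck ctx ∧ c' ≤ c + L) ∧
  (ck ctx = 2 → c' ≤ c + 2 * L ∧ (ck ctx' = 3 → c + c' ≤ 2 * L)) ∧
  (ck ctx = 3 → c' ≤ c + 2 * L ∧ (ck ctx' = 2 → c + c' ≤ 2 * L)) ∧
  (eqd ctx → eqd ctx' ∧ ck ctx' = ck ctx ∧ c' = c)

lemma stepFacts_of_wp {g : Guard X} {up : Update X} {M L : ℕ}
    (hg : ∀ φ ∈ g, AC.cst φ ≤ M) (hup : ∀ z, Rhs.cst (up z) ≤ L)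
    {ctx ctx' : Ctx X} {c c' : ℕ} (hc' : max M L < c')
    (h : Ctx.fill ctx' c' = wp (Ctx.fill ctx c) g up) :
    StepFacts L ctx c ctx' c' := by
  cases ctx with
  | upper x =>
    obtain ⟨h1, h2⟩ := step0 hg hup hc' (h : _ = wp (AC.upper x .le c) g up)
    exact ⟨fun _ => ⟨by rw [h1]; rfl, h2⟩, fun hc => absurd hc (by simp [ck]),
      fun hc => absurd hc (by simp [ck]), fun he => absurd he (by simp [eqd])⟩
  | lower x =>
    obtain ⟨h1, h2⟩ := step1 hg hup hc' (h : _ = wp (AC.lower c .le x) g up)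
    exact ⟨fun _ => ⟨by rw [h1]; rfl, h2⟩, fun hc => absurd hc (by simp [ck]),
      fun hc => absurd hc (by simp [ck]), fun he => absurd he (by simp [eqd])⟩
  | dUpper x y =>
    obtain ⟨h1, h2, h3⟩ := step2 hg hup hc' (h : _ = wp (AC.dUpper x y .le c) g up)
    refine ⟨fun hc => absurd hc (by simp [ck]), fun _ => ⟨h1, h2⟩,
      fun hc => absurd hc (by simp [ck]), fun he => ?_⟩
    have hxy : x = y := by simpa [eqd] using he
    obtain ⟨e1, e2, e3⟩ := h3 hxy
    exact ⟨e1, by rw [e2]; rfl, e3⟩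
  | dLower x y =>
    obtain ⟨h1, h2, h3⟩ := step3 hg hup hc' (h : _ = wp (AC.dLower c .le x y) g up)
    refine ⟨fun hc => absurd hc (by simp [ck]), fun hc => absurd hc (by simp [ck]),
      fun _ => ⟨h1, h2⟩, fun he => ?_⟩
    have hxy : x = y := by simpa [eqd] using he
    obtain ⟨e1, e2, e3⟩ := h3 hxy
    exact ⟨e1, by rw [e2]; rfl, e3⟩

open Classical in
/-- first occurrences of non-equal diagonal contexts in the region `(m, K]` -/
noncomputable def FdS (qs : ℕ → Q) (ctxs : ℕ → Ctx X) (m K : ℕ) : Finset ℕ :=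
  (Finset.Ico (m + 1) (K + 1)).filter fun i =>
    2 ≤ ck (ctxs i) ∧ ¬ eqd (ctxs i) ∧
      ∀ j, m < j → j < i → ¬(qs j = qs i ∧ ctxs j = ctxs i)

open Classical in
/-- first occurrences of non-diagonal contexts in the region `(m, K]` -/
noncomputable def FuS (qs : ℕ → Q) (ctxs : ℕ → Ctx X) (m K : ℕ) : Finset ℕ :=
  (Finset.Ico (m + 1) (K + 1)).filter fun i =>
    ck (ctxs i) ≤ 1 ∧ ∀ j, m < j → j < i → ¬(qs j = qs i ∧ ctxs j = ctxs i)

lemma mem_FdS {qs : ℕ → Q} {ctxs : ℕ → Ctx X} {m K i : ℕ} :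
    i ∈ FdS qs ctxs m K ↔ (m < i ∧ i ≤ K) ∧ 2 ≤ ck (ctxs i) ∧ ¬ eqd (ctxs i) ∧
      ∀ j, m < j → j < i → ¬(qs j = qs i ∧ ctxs j = ctxs i) := by
  simp [FdS, Finset.mem_Ico, Nat.lt_succ_iff, Nat.succ_le_iff]

lemma mem_FuS {qs : ℕ → Q} {ctxs : ℕ → Ctx X} {m K i : ℕ} :
    i ∈ FuS qs ctxs m K ↔ (m < i ∧ i ≤ K) ∧ ck (ctxs i) ≤ 1 ∧
      ∀ j, m < j → j < i → ¬(qs j = qs i ∧ ctxs j = ctxs i) := by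
  simp [FuS, Finset.mem_Ico, Nat.lt_succ_iff, Nat.succ_le_iff]

lemma FdS_mono {qs : ℕ → Q} {ctxs : ℕ → Ctx X} {m K K' : ℕ} (h : K ≤ K') :
    FdS qs ctxs m K ⊆ FdS qs ctxs m K' := by
  intro i hi; rw [mem_FdS] at hi ⊢; exact ⟨⟨hi.1.1, hi.1.2.trans h⟩, hi.2⟩

lemma FuS_mono {qs : ℕ → Q} {ctxs : ℕ → Ctx X} {m K K' : ℕ} (h : K ≤ K') :
    FuS qs ctxs m K ⊆ FuS qs ctxs m K' := by
  intro i hi; rw [mem_FuS] at hi ⊢; exact ⟨⟨hi.1.1, hi.1.2.trans h⟩, hi.2⟩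

end Sets
/-- Lemma `large-cycle`. A propagation sequence starting with a
small constant and ending with a constant larger than
`max(M,L) + 2·L·|Q|·|X|²` contains a positive cycle with large constants. -/
theorem stmt15 {Q X : Type} [Fintype Q] [Fintype X] (A : UTA Q X)
    (hw : weakGuards A) (n : ℕ) (qs : ℕ → Q) (ctxs : ℕ → Ctx X) (cs : ℕ → ℕ)
    (hp : PropSeq A 0 n qs ctxs cs)
    (h0 : cs 0 ≤ max (maxGuardConst A) (maxUpdateConst A))
    (hn : max (maxGuardConst A) (maxUpdateConst A) +
        2 * maxUpdateConst A * Fintype.card Q * Fintype.card X ^ 2 < cs n) :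
    ∃ i j, 0 < i ∧ i < j ∧ j ≤ n ∧ qs i = qs j ∧ ctxs i = ctxs j ∧ cs i < cs j ∧
      ∀ k, i ≤ k → k ≤ j → max (maxGuardConst A) (maxUpdateConst A) < cs k := by
  classical
  by_contra hcon
  push_neg at hcon
  set M := maxGuardConst A with hMdef
  set L := maxUpdateConst A with hLdef
  set B := max M L with hBdef
  set cq := Fintype.card Q with hcqdef
  set cx := Fintype.card X with hcxdef
  have hcq : 1 ≤ cq := Fintype.card_pos_iff.mpr ⟨qs 0⟩
  have hcx : 1 ≤ cx := Fintype.card_pos_iff.mpr ⟨(cclocks (ctxs 0)).1⟩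
  have hLB : L ≤ B := le_max_right M L
  -- the last small index
  set m := Nat.findGreatest (fun k => cs k ≤ B) n with hmdef
  have hmn : m ≤ n := Nat.findGreatest_le n
  have hmB : cs m ≤ B := Nat.findGreatest_spec (P := fun k => cs k ≤ B) (Nat.zero_le n) h0
  have hreg : ∀ k, m < k → k ≤ n → B < cs k := by
    intro k h1 h2
    have := Nat.findGreatest_is_greatest (n := n) (P := fun k => cs k ≤ B) h1 h2
    omega
  have hmltn : m < n := by
    rcases Nat.lt_or_ge m n with h | h
    · exact h
    · have hEq : m = n := le_antisymm hmn h
      rw [hEq] at hmB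
      omega
  -- no increasing repetition in the region
  have hNR : ∀ i j, m < i → i < j → j ≤ n → qs i = qs j → ctxs i = ctxs j →
      cs j ≤ cs i := by
    intro i j h1 h2 h3 h4 h5
    by_contra hlt
    push_neg at hlt
    obtain ⟨k, hk1, hk2, hk3⟩ := hcon i j (by omega) h2 h3 h4 h5 hlt
    exact absurd hk3 (not_le.mpr (hreg k (by omega) (le_trans hk2 h3)))
  -- step facts
  have hkey : ∀ k, m ≤ k → k < n →
      StepFacts L (ctxs k) (cs k) (ctxs (k + 1)) (cs (k + 1)) := by
    intro k hk1 hk2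
    obtain ⟨t, ht, -, -, hwp⟩ := hp k (Nat.zero_le k) hk2
    exact stepFacts_of_wp (fun φ hφ => guard_cst_le A ht hφ)
      (fun z => update_cst_le A ht z) (hreg (k + 1) (by omega) (by omega)) hwp
  -- persistence of non-diagonal contexts
  have hpers01 : ∀ i j, m < i → i ≤ j → j ≤ n → ck (ctxs i) ≤ 1 →
      ck (ctxs j) = ck (ctxs i) := by
    intro i j h1 h2
    induction j, h2 using Nat.le_induction with
    | base => intro _ _; rfl
    | succ j hij ih =>
      intro h3 h4
      have hj : ck (ctxs j) = ck (ctxs i) := ih (by omega) h4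
      have SF := hkey j (by omega) (by omega)
      have := (SF.1 (by omega)).1
      omega
  have hpersNot3 : ∀ i j, m < i → i ≤ j → j ≤ n → ck (ctxs i) ≠ 3 →
      ck (ctxs j) ≠ 3 := by
    intro i j h1 h2
    induction j, h2 using Nat.le_induction with
    | base => intro _ h4; exact h4
    | succ j hij ih =>
      intro h3 h4
      have hj : ck (ctxs j) ≠ 3 := ih (by omega) h4
      have SF := hkey j (by omega) (by omega)
      rcases ck_cases (ctxs j) with h | h | h | h
      · have := (SF.1 (by omega)).1; omega
      · have := (SF.1 (by omega)).1; omega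
      · intro hc3
        have h2L := (SF.2.1 h).2 hc3
        have hb1 := hreg j (by omega) (by omega)
        have hb2 := hreg (j + 1) (by omega) (by omega)
        omega
      · exact absurd h hj
  have hpersNot2 : ∀ i j, m < i → i ≤ j → j ≤ n → ck (ctxs i) ≠ 2 →
      ck (ctxs j) ≠ 2 := by
    intro i j h1 h2
    induction j, h2 using Nat.le_induction with
    | base => intro _ h4; exact h4
    | succ j hij ih =>
      intro h3 h4
      have hj : ck (ctxs j) ≠ 2 := ih (by omega) h4
      have SF := hkey j (by omega) (by omega)
      rcases ck_cases (ctxs j) with h | h | h | h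
      · have := (SF.1 (by omega)).1; omega
      · have := (SF.1 (by omega)).1; omega
      · exact absurd h hj
      · intro hc2
        have h2L := (SF.2.2.1 h).2 hc2
        have hb1 := hreg j (by omega) (by omega)
        have hb2 := hreg (j + 1) (by omega) (by omega)
        omega
  -- persistence of equal-diagonal contexts
  have hpersEq : ∀ i j, m < i → i ≤ j → j ≤ n → eqd (ctxs i) →
      eqd (ctxs j) ∧ cs j = cs i := by
    intro i j h1 h2
    induction j, h2 using Nat.le_induction with
    | base => intro _ h4; exact ⟨h4, rfl⟩
    | succ j hij ih =>
      intro h3 h4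
      obtain ⟨he, hc⟩ := ih (by omega) h4
      have SF := hkey j (by omega) (by omega)
      obtain ⟨e1, e2, e3⟩ := SF.2.2.2 he
      exact ⟨e1, by omega⟩
  -- cardinality bound for diagonal first occurrences
  have hdiagcard : ((Finset.univ : Finset (X × X)).filter fun p => p.1 ≠ p.2).card
      = cx ^ 2 - cx := by
    have h1 : ((Finset.univ : Finset (X × X)).filter fun p => p.1 = p.2)
        = Finset.univ.image (fun x : X => (x, x)) := by
      ext ⟨p1, p2⟩
      simp only [Finset.mem_filter, Finset.mem_univ, true_and, Finset.mem_image]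
      constructor
      · rintro rfl; exact ⟨p1, rfl⟩
      · rintro ⟨a, ha⟩
        injection ha with ha1 ha2
        rw [← ha1, ← ha2]
    have h2 : ((Finset.univ : Finset (X × X)).filter fun p => p.1 = p.2).card = cx := by
      rw [h1, Finset.card_image_of_injective _
        (fun a b hab => ((Prod.mk.injEq a a b b).mp hab).1)]
      simp [hcxdef]
    have h3 := Finset.card_filter_add_card_filter_not
      (s := (Finset.univ : Finset (X × X))) (p := fun p => p.1 = p.2)
    have h4 : (Finset.univ : Finset (X × X)).card = cx * cx := by
      simp [Fintype.card_prod, hcxdef]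
    have h5 : cx ^ 2 = cx * cx := pow_two cx
    have h6 : (Finset.filter (fun p : X × X => ¬ p.1 = p.2) Finset.univ).card
        = (Finset.filter (fun p : X × X => p.1 ≠ p.2) Finset.univ).card := rfl
    omega
  have hFd_card : ∀ K, K ≤ n → (FdS qs ctxs m K).card ≤ cq * (cx ^ 2 - cx) := by
    intro K hK
    have hmain : (FdS qs ctxs m K).card ≤
        ((Finset.univ : Finset Q) ×ˢ
          ((Finset.univ : Finset (X × X)).filter fun p => p.1 ≠ p.2)).card := by
      apply Finset.card_le_card_of_injOn (fun i => (qs i, cclocks (ctxs i)))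
      · intro i hi
        simp only [Finset.mem_coe] at hi ⊢
        rw [mem_FdS] at hi
        obtain ⟨⟨hi1, hi2⟩, hck, hne, -⟩ := hi
        rw [Finset.mem_product, Finset.mem_filter]
        refine ⟨Finset.mem_univ _, Finset.mem_univ _, ?_⟩
        rcases hc : ctxs i with x | x | ⟨x, y⟩ | ⟨x, y⟩ <;> rw [hc] at hck hne <;>
          simp [ck, eqd, cclocks] at hck hne ⊢ <;> exact hne
      · have haux : ∀ i ∈ (FdS qs ctxs m K : Set ℕ), ∀ j ∈ (FdS qs ctxs m K : Set ℕ),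
            i ≤ j → (qs i, cclocks (ctxs i)) = (qs j, cclocks (ctxs j)) → i = j := by
          intro i hi j hj hij heq
          simp only [Finset.coe_mem, Finset.mem_coe] at hi hj
          rw [mem_FdS] at hi hj
          obtain ⟨⟨hi1, hi2⟩, hicks, hine, -⟩ := hi
          obtain ⟨⟨hj1, hj2⟩, hjcks, hjne, hjfirst⟩ := hj
          have hqe : qs i = qs j := congrArg Prod.fst heq
          have hce : cclocks (ctxs i) = cclocks (ctxs j) := congrArg Prod.snd heq
          have hkk : ck (ctxs i) = ck (ctxs j) := by
            rcases ck_cases (ctxs i) with h | h | h | h <;>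
              rcases ck_cases (ctxs j) with h' | h' | h' | h' <;> try omega
            · exact absurd h' (hpersNot3 i j hi1 hij (by omega) (by omega))
            · exact absurd h' (hpersNot2 i j hi1 hij (by omega) (by omega))
          have hctx : ctxs i = ctxs j := by
            rcases hc : ctxs i with x | x | ⟨x, y⟩ | ⟨x, y⟩ <;>
              rcases hc' : ctxs j with x' | x' | ⟨x', y'⟩ | ⟨x', y'⟩ <;>
              rw [hc, hc'] at hkk hce <;> simp [ck, cclocks, Prod.ext_iff] at hkk hce ⊢ <;>
              tauto
          by_contra hne2
          exact hjfirst i hi1 (by omega) ⟨hqe, hctx⟩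
        intro i hi j hj heq
        rcases le_total i j with h | h
        · exact haux i hi j hj h heq
        · exact (haux j hj i hi h heq.symm).symm
    have hcard : ((Finset.univ : Finset Q) ×ˢ
        ((Finset.univ : Finset (X × X)).filter fun p => p.1 ≠ p.2)).card
        = cq * (cx ^ 2 - cx) := by
      rw [Finset.card_product, hdiagcard]
      simp [hcqdef]
    omega
  have hFu_card : ∀ K, K ≤ n → (FuS qs ctxs m K).card ≤ cq * cx := by
    intro K hK
    have hmain : (FuS qs ctxs m K).card ≤
        ((Finset.univ : Finset (Q × X))).card := by
      apply Finset.card_le_card_of_injOn (fun i => (qs i, (cclocks (ctxs i)).1))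
      · intro i hi; exact Finset.mem_univ _
      · have haux : ∀ i ∈ (FuS qs ctxs m K : Set ℕ), ∀ j ∈ (FuS qs ctxs m K : Set ℕ),
            i ≤ j → (qs i, (cclocks (ctxs i)).1) = (qs j, (cclocks (ctxs j)).1) → i = j := by
          intro i hi j hj hij heq
          simp only [Finset.mem_coe] at hi hj
          rw [mem_FuS] at hi hj
          obtain ⟨⟨hi1, hi2⟩, hicks, -⟩ := hi
          obtain ⟨⟨hj1, hj2⟩, hjcks, hjfirst⟩ := hj
          have hqe : qs i = qs j := congrArg Prod.fst heq
          have hce : (cclocks (ctxs i)).1 = (cclocks (ctxs j)).1 := congrArg Prod.snd heq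
          have hkk : ck (ctxs j) = ck (ctxs i) := hpers01 i j hi1 hij (by omega) hicks
          have hctx : ctxs i = ctxs j := by
            rcases hc : ctxs i with x | x | ⟨x, y⟩ | ⟨x, y⟩ <;>
              rcases hc' : ctxs j with x' | x' | ⟨x', y'⟩ | ⟨x', y'⟩ <;>
              rw [hc] at hicks hce hkk <;> rw [hc'] at hjcks hce hkk <;>
              simp [ck, cclocks] at hicks hjcks hce hkk ⊢ <;> tauto
          by_contra hne2
          exact hjfirst i hi1 (by omega) ⟨hqe, hctx⟩
        intro i hi j hj heq
        rcases le_total i j with h | h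
        · exact haux i hi j hj h heq
        · exact (haux j hj i hi h heq.symm).symm
    have hcard : ((Finset.univ : Finset (Q × X))).card = cq * cx := by
      simp [Fintype.card_prod, hcqdef, hcxdef]
    omega
  -- main invariant
  have hinv : ∀ K, m ≤ K → K ≤ n → (∀ i, m < i → i ≤ K → ¬ eqd (ctxs i)) →
      cs K ≤ B + 2 * L * (FdS qs ctxs m K).card + L * (FuS qs ctxs m K).card +
        (if (FuS qs ctxs m K).Nonempty then L else 0) := by
    intro K
    induction K using Nat.strong_induction_on with
    | _ K ih =>
      intro hK1 hK2 hKe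
      rcases Nat.eq_or_lt_of_le hK1 with hKm | hKm
      · rw [← hKm]
        have : (if (FuS qs ctxs m m).Nonempty then L else 0) ≥ 0 := Nat.zero_le _
        omega
      · obtain ⟨k, rfl⟩ : ∃ k, K = k + 1 := ⟨K - 1, by omega⟩
        have hkm : m ≤ k := by omega
        have hkn : k < n := by omega
        have hBK : B < cs (k + 1) := hreg (k + 1) (by omega) hK2
        have SF := hkey k hkm hkn
        have hFdmono : (FdS qs ctxs m k).card ≤ (FdS qs ctxs m (k + 1)).card :=
          Finset.card_le_card (FdS_mono (by omega))
        have hFumono : (FuS qs ctxs m k).card ≤ (FuS qs ctxs m (k + 1)).card :=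
          Finset.card_le_card (FuS_mono (by omega))
        have hitemono : (if (FuS qs ctxs m k).Nonempty then L else 0) ≤
            (if (FuS qs ctxs m (k + 1)).Nonempty then L else 0) := by
          by_cases h1 : (FuS qs ctxs m k).Nonempty
          · rw [if_pos h1, if_pos (h1.mono (FuS_mono (by omega)))]
          · rw [if_neg h1]; exact Nat.zero_le _
        by_cases hfirst : ∀ j, m < j → j < k + 1 → ¬(qs j = qs (k + 1) ∧ ctxs j = ctxs (k + 1))
        · have hcsk := ih k (by omega) (by omega) (by omega)
            (fun i h1 h2 => hKe i h1 (by omega))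
          rcases ck_cases (ctxs (k + 1)) with hck | hck | hck | hck
          -- non-diagonal target
          case _ | _ =>
            have hmem : (k + 1) ∈ FuS qs ctxs m (k + 1) :=
              mem_FuS.mpr ⟨⟨by omega, le_refl _⟩, by omega, hfirst⟩
            have hnotmem : (k + 1) ∉ FuS qs ctxs m k := fun hc => by
              have := (mem_FuS.mp hc).1.2; omega
            have hcard : (FuS qs ctxs m k).card + 1 ≤ (FuS qs ctxs m (k + 1)).card := by
              have hins : insert (k + 1) (FuS qs ctxs m k) ⊆ FuS qs ctxs m (k + 1) :=
                Finset.insert_subset hmem (FuS_mono (by omega))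
              have := Finset.card_le_card hins
              rw [Finset.card_insert_of_notMem hnotmem] at this
              omega
            have hne : (FuS qs ctxs m (k + 1)).Nonempty := ⟨k + 1, hmem⟩
            rw [if_pos hne]
            have hb : L * ((FuS qs ctxs m k).card + 1) ≤ L * (FuS qs ctxs m (k + 1)).card :=
              Nat.mul_le_mul le_rfl hcard
            have hbe : L * ((FuS qs ctxs m k).card + 1) = L * (FuS qs ctxs m k).card + L := by
              ring
            have h2a : 2 * L * (FdS qs ctxs m k).card ≤ 2 * L * (FdS qs ctxs m (k + 1)).card :=
              Nat.mul_le_mul le_rfl hFdmono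
            have hitek : (if (FuS qs ctxs m k).Nonempty then L else 0) ≤ L := by
              split <;> omega
            rcases ck_cases (ctxs k) with hsk | hsk | hsk | hsk
            case _ | _ =>
              have hinc := (SF.1 (by omega)).2
              omega
            case _ =>
              have hinc := (SF.2.1 hsk).1
              have hFuk : FuS qs ctxs m k = ∅ := by
                rw [← Finset.not_nonempty_iff_eq_empty]
                rintro ⟨j, hj⟩
                rw [mem_FuS] at hj
                have := hpers01 j k hj.1.1 hj.1.2 (by omega) hj.2.1
                omega
              rw [hFuk] at hcsk
              simp only [Finset.card_empty, Nat.mul_zero, Nat.add_zero,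
                Finset.not_nonempty_empty, if_false] at hcsk
              have hb1 : L * 1 ≤ L * (FuS qs ctxs m (k + 1)).card := by
                apply Nat.mul_le_mul le_rfl
                rw [hFuk] at hcard
                simpa using hcard
              omega
            case _ =>
              have hinc := (SF.2.2.1 hsk).1
              have hFuk : FuS qs ctxs m k = ∅ := by
                rw [← Finset.not_nonempty_iff_eq_empty]
                rintro ⟨j, hj⟩
                rw [mem_FuS] at hj
                have := hpers01 j k hj.1.1 hj.1.2 (by omega) hj.2.1
                omega
              rw [hFuk] at hcsk
              simp only [Finset.card_empty, Nat.mul_zero, Nat.add_zero,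
                Finset.not_nonempty_empty, if_false] at hcsk
              have hb1 : L * 1 ≤ L * (FuS qs ctxs m (k + 1)).card := by
                apply Nat.mul_le_mul le_rfl
                rw [hFuk] at hcard
                simpa using hcard
              omega
          -- diagonal target
          case _ | _ =>
            have hnd : ¬ eqd (ctxs (k + 1)) := hKe (k + 1) (by omega) le_rfl
            have hmem : (k + 1) ∈ FdS qs ctxs m (k + 1) :=
              mem_FdS.mpr ⟨⟨by omega, le_refl _⟩, by omega, hnd, hfirst⟩
            have hnotmem : (k + 1) ∉ FdS qs ctxs m k := fun hc => by
              have := (mem_FdS.mp hc).1.2; omega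
            have hcard : (FdS qs ctxs m k).card + 1 ≤ (FdS qs ctxs m (k + 1)).card := by
              have hins : insert (k + 1) (FdS qs ctxs m k) ⊆ FdS qs ctxs m (k + 1) :=
                Finset.insert_subset hmem (FdS_mono (by omega))
              have := Finset.card_le_card hins
              rw [Finset.card_insert_of_notMem hnotmem] at this
              omega
            have h2a : 2 * L * ((FdS qs ctxs m k).card + 1) ≤
                2 * L * (FdS qs ctxs m (k + 1)).card := Nat.mul_le_mul le_rfl hcard
            have h2ae : 2 * L * ((FdS qs ctxs m k).card + 1) =
                2 * L * (FdS qs ctxs m k).card + 2 * L := by ring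
            have hbmono : L * (FuS qs ctxs m k).card ≤ L * (FuS qs ctxs m (k + 1)).card :=
              Nat.mul_le_mul le_rfl hFumono
            have hinc : cs (k + 1) ≤ cs k + 2 * L := by
              rcases ck_cases (ctxs k) with hsk | hsk | hsk | hsk
              · have := (SF.1 (by omega)).1; omega
              · have := (SF.1 (by omega)).1; omega
              · exact (SF.2.1 hsk).1
              · exact (SF.2.2.1 hsk).1
            omega
        · push_neg at hfirst
          obtain ⟨j, hj1, hj2, hj3, hj4⟩ := hfirst
          have hle : cs (k + 1) ≤ cs j := hNR j (k + 1) hj1 hj2 hK2 hj3 hj4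
          have hcsj := ih j (by omega) (by omega) (by omega)
            (fun i h1 h2 => hKe i h1 (by omega))
          have h2a : 2 * L * (FdS qs ctxs m j).card ≤ 2 * L * (FdS qs ctxs m (k + 1)).card :=
            Nat.mul_le_mul le_rfl (Finset.card_le_card (FdS_mono (by omega)))
          have hb : L * (FuS qs ctxs m j).card ≤ L * (FuS qs ctxs m (k + 1)).card :=
            Nat.mul_le_mul le_rfl (Finset.card_le_card (FuS_mono (by omega)))
          have hite : (if (FuS qs ctxs m j).Nonempty then L else 0) ≤
              (if (FuS qs ctxs m (k + 1)).Nonempty then L else 0) := by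
            by_cases h1 : (FuS qs ctxs m j).Nonempty
            · rw [if_pos h1, if_pos (h1.mono (FuS_mono (by omega)))]
            · rw [if_neg h1]; exact Nat.zero_le _
          omega
  -- common arithmetic facts
  have hxx : cx ≤ cx ^ 2 := by
    have : cx * 1 ≤ cx * cx := Nat.mul_le_mul le_rfl hcx
    have h5 : cx ^ 2 = cx * cx := pow_two cx
    omega
  have he1 : cq * (cx ^ 2 - cx) + cq * cx = cq * cx ^ 2 := by
    rw [← Nat.mul_add]
    congr 1
    omega
  have he2 : 2 * L * (cq * (cx ^ 2 - cx)) + 2 * L * (cq * cx) = 2 * L * (cq * cx ^ 2) := by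
    rw [← Nat.mul_add, he1]
  have he3 : 2 * L * (cq * cx ^ 2) = 2 * L * cq * cx ^ 2 := by ring
  have hqx1 : 1 ≤ cq * cx := Nat.one_le_iff_ne_zero.mpr (by positivity)
  by_cases hE : ∃ i, m < i ∧ i ≤ n ∧ eqd (ctxs i)
  · -- an equal-diagonal context occurs in the region
    set i0 := Nat.find hE with hi0def
    obtain ⟨ha1, ha2, ha3⟩ := Nat.find_spec hE
    rw [← hi0def] at ha1 ha2 ha3
    have hi0min : ∀ i, i < i0 → ¬(m < i ∧ i ≤ n ∧ eqd (ctxs i)) :=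
      fun i hi => Nat.find_min hE hi
    have hnoeq : ∀ i, m < i → i ≤ i0 - 1 → ¬ eqd (ctxs i) := by
      intro i h1 h2 he
      exact hi0min i (by omega) ⟨h1, by omega, he⟩
    have hcs_eq : cs n = cs i0 := (hpersEq i0 n ha1 ha2 le_rfl ha3).2
    have hstep_i0 : cs i0 ≤ cs (i0 - 1) + 2 * L := by
      have SF := hkey (i0 - 1) (by omega) (by omega)
      have heq : i0 - 1 + 1 = i0 := by omega
      rw [heq] at SF
      rcases ck_cases (ctxs (i0 - 1)) with hsk | hsk | hsk | hsk
      · have h1 := (SF.1 (by omega)).1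
        have := eqd_ck ha3
        omega
      · have h1 := (SF.1 (by omega)).1
        have := eqd_ck ha3
        omega
      · exact (SF.2.1 hsk).1
      · exact (SF.2.2.1 hsk).1
    have hbound := hinv (i0 - 1) (by omega) (by omega) hnoeq
    have hFuEmpty : FuS qs ctxs m (i0 - 1) = ∅ := by
      rw [← Finset.not_nonempty_iff_eq_empty]
      rintro ⟨j, hj⟩
      rw [mem_FuS] at hj
      have h1 := hpers01 j i0 hj.1.1 (by omega) (by omega) hj.2.1
      have := eqd_ck ha3
      omega
    rw [hFuEmpty] at hbound
    simp only [Finset.card_empty, Nat.mul_zero, Nat.add_zero,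
      Finset.not_nonempty_empty, if_false] at hbound
    have hD := hFd_card (i0 - 1) (by omega)
    have h2a : 2 * L * (FdS qs ctxs m (i0 - 1)).card ≤ 2 * L * (cq * (cx ^ 2 - cx)) :=
      Nat.mul_le_mul le_rfl hD
    have h2b : 2 * L * 1 ≤ 2 * L * (cq * cx) := Nat.mul_le_mul le_rfl hqx1
    omega
  · push_neg at hE
    have hbound := hinv n hmn le_rfl hE
    have hD := hFd_card n le_rfl
    have hU := hFu_card n le_rfl
    have h2a : 2 * L * (FdS qs ctxs m n).card ≤ 2 * L * (cq * (cx ^ 2 - cx)) :=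
      Nat.mul_le_mul le_rfl hD
    have hb : L * (FuS qs ctxs m n).card ≤ L * (cq * cx) := Nat.mul_le_mul le_rfl hU
    have hite : (if (FuS qs ctxs m n).Nonempty then L else 0) ≤ L := by split <;> omega
    have hl1 : L * 1 ≤ L * (cq * cx) := Nat.mul_le_mul le_rfl hqx1
    have hsum : L * (cq * cx) + L * (cq * cx) = 2 * L * (cq * cx) := by ring
    omega
end

section
/- For every run (ℓ₀, 0) → (ℓ₁, c₁) → ⋯ → (ℓ_n, c_n) of the bounded one-counter automaton B, the sequence (ℓ₀, x − y ≤ 0) → (ℓ₁, x − y ≤ c₁) → ⋯ → (ℓ_n, x − y ≤ c_n) is a propagation sequence in the UTA A_B. -/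
open Classical

/-- A bounded one-counter automaton. -/
structure BCA (L : Type) where
  init : L
  bound : ℕ
  trans : List (L × ℤ × L)
  hbound : ∀ d ∈ trans, d.2.1.natAbs ≤ bound

/-- A run of a bounded one-counter automaton. -/
def BCA.IsRun {L : Type} (B : BCA L) (n : ℕ) (ls : ℕ → L) (cs : ℕ → ℤ) : Prop :=
  ls 0 = B.init ∧ cs 0 = 0 ∧ (∀ i, i ≤ n → 0 ≤ cs i ∧ cs i ≤ (B.bound : ℤ)) ∧
  ∀ i, i < n → ∃ p : ℤ, (ls i, p, ls (i + 1)) ∈ B.trans ∧ cs (i + 1) = cs i + p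

/-- The identity update on the two clocks `x = 0` and `y = 1`. -/
def idUp : Update (Fin 2) := fun z => Rhs.clock z 0

/-- The UTA `A_B` built from a bounded one-counter automaton `B` and a target
state `ℓ_t`.  The fresh states `ℓ₀'` and `ℓ_t'` are `Sum.inr false` and
`Sum.inr true`; the clocks are `x = 0` and `y = 1`. -/
def mkAB {L : Type} (B : BCA L) (lt : L) : UTA (L ⊕ Bool) (Fin 2) where
  init := Sum.inl B.init
  acc := ∅
  trans :=
    (B.trans.map fun d =>
      { src := Sum.inl d.2.2
        guard := [AC.upper 0 .le B.bound, AC.upper 1 .le 0]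
        update := fun z => if z = (0 : Fin 2) then Rhs.clock 0 (-d.2.1) else Rhs.clock z 0
        tgt := Sum.inl d.1 }) ++
    [ { src := Sum.inl B.init, guard := [AC.dUpper 0 1 .le 0], update := idUp,
        tgt := Sum.inr false },
      { src := Sum.inr true, guard := [], update := idUp, tgt := Sum.inl lt },
      { src := Sum.inr true, guard := [],
        update := fun z => if z = (1 : Fin 2) then Rhs.clock 1 1 else Rhs.clock z 0,
        tgt := Sum.inr true } ]

/-- Lemma `counter-to-timed`. Every run of `B` yields a
propagation sequence `(ℓ₀, x−y ≤ 0) → ⋯ → (ℓ_n, x−y ≤ c_n)` in `A_B`. -/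
theorem stmt17 {L : Type} [Fintype L] (B : BCA L) (lt : L) (n : ℕ)
    (ls : ℕ → L) (cs : ℕ → ℤ) (h : B.IsRun n ls cs) :
    PropSeq (mkAB B lt) 0 n (fun i => Sum.inl (ls i)) (fun _ => Ctx.dUpper 0 1)
      (fun i => (cs i).toNat) := by
  obtain ⟨-, -, hb, hstep⟩ := h
  intro k _ hk
  obtain ⟨p, hp, hc⟩ := hstep k hk
  set d : L × ℤ × L := (ls k, p, ls (k + 1)) with hd
  refine ⟨{ src := Sum.inl d.2.2
            guard := [AC.upper 0 .le B.bound, AC.upper 1 .le 0]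
            update := fun z => if z = (0 : Fin 2) then Rhs.clock 0 (-d.2.1) else Rhs.clock z 0
            tgt := Sum.inl d.1 }, ?_, rfl, rfl, ?_⟩
  · simp only [mkAB, List.mem_append, List.mem_map]
    exact Or.inl ⟨d, hp, rfl⟩
  · have h0 : 0 ≤ cs k := (hb k (le_of_lt hk)).1
    have h1 : 0 ≤ cs (k + 1) := (hb (k + 1) hk).1
    have h2 : cs (k + 1) ≤ (B.bound : ℤ) := (hb (k + 1) hk).2
    set up : Update (Fin 2) :=
      fun z => if z = (0 : Fin 2) then Rhs.clock 0 (-d.2.1) else Rhs.clock z 0 with hup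
    set g : Guard (Fin 2) := [AC.upper 0 .le B.bound, AC.upper 1 .le 0] with hg
    have hinv : upInvA up (AC.dUpper 0 1 .le (cs k).toNat)
        = AC.dUpper 0 1 .le (cs (k + 1)).toNat := by
      have hup0 : up 0 = Rhs.clock 0 (-p) := by simp [hup, hd]
      have hup1 : up 1 = Rhs.clock 1 0 := by
        simp [hup]
      have harith : ((cs k).toNat : ℤ) - (-p) + 0 = cs (k + 1) := by
        rw [Int.toNat_of_nonneg h0]; omega
      simp only [upInvA, hup0, hup1, harith]
      rw [if_neg (by omega)]
    have hcase3 : ¬ case3G g 0 1 (cs (k + 1)).toNat := by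
      rintro (⟨o, c, hm, hlt⟩ | ⟨o, c, hm, hlt⟩ | ⟨o, e, hm, hlt⟩) <;>
        simp only [hg, List.mem_cons, List.not_mem_nil, or_false] at hm
      · rcases hm with hm | hm <;> cases hm
        · omega
      · rcases hm with hm | hm <;> cases hm
      · rcases hm with hm | hm <;> cases hm
    show Ctx.fill (Ctx.dUpper 0 1) (cs (k + 1)).toNat
      = wp (Ctx.fill (Ctx.dUpper 0 1) (cs k).toNat) g up
    simp only [Ctx.fill, wp, hinv, if_neg hcase3]
end

section
/- For every propagation sequence (ℓ₀, x − y ≤ 0) → (ℓ₁, x − y ≤ c₁) → ⋯ → (ℓ_n, x − y ≤ c_n) in the UTA A_B with ℓ_i ∈ L for all 0 ≤ i ≤ n, the sequence (ℓ₀, 0) → (ℓ₁, c₁) → ⋯ → (ℓ_n, c_n) is a run of the bounded one-counter automaton B. -/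
open Classical

section Aux

private lemma case3_iff (b d : ℕ) :
    case3G [AC.upper (0:Fin 2) .le b, AC.upper 1 .le 0] 0 1 d ↔ b < d := by
  constructor
  · rintro (⟨o, c, hc, hlt⟩ | ⟨o, c, hc, hlt⟩ | ⟨o, e, hc, hlt⟩) <;>
      simp only [List.mem_cons, List.not_mem_nil, or_false] at hc <;>
      rcases hc with hc | hc <;> cases hc <;> omega
  · intro hb
    exact Or.inl ⟨.le, b, by simp, hb⟩

private lemma case3_10 (b d : ℕ) (hd : 0 < d) :
    case3G [AC.upper (0:Fin 2) .le b, AC.upper 1 .le 0] 1 0 d :=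
  Or.inl ⟨.le, 0, by simp, hd⟩

private lemma key (b : ℕ) (p : ℤ) (c c' : ℕ)
    (hw : AC.dUpper (0:Fin 2) 1 .le c' =
      wp (AC.dUpper 0 1 .le c) [AC.upper 0 .le b, AC.upper 1 .le 0]
        (fun z => if z = (0:Fin 2) then Rhs.clock 0 (-p) else Rhs.clock z 0)) :
    (c' : ℤ) = (c : ℤ) + p ∧ c' ≤ b := by
  have h0 : (fun z => if z = (0:Fin 2) then Rhs.clock (0:Fin 2) (-p) else Rhs.clock z 0) 0
      = Rhs.clock 0 (-p) := by simp
  have h1 : (fun z => if z = (0:Fin 2) then Rhs.clock (0:Fin 2) (-p) else Rhs.clock z 0) 1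
      = Rhs.clock 1 0 := by simp
  have hinv : upInvA
      (fun z => if z = (0:Fin 2) then Rhs.clock (0:Fin 2) (-p) else Rhs.clock z 0)
      (AC.dUpper 0 1 .le c) =
      if (c : ℤ) - (-p) + 0 < 0 then AC.dLower (-((c : ℤ) - (-p) + 0)).toNat .le 1 0
      else AC.dUpper 0 1 .le ((c : ℤ) - (-p) + 0).toNat := by
    rw [upInvA]
    norm_num
  by_cases hneg : (c : ℤ) - (-p) + 0 < 0
  · simp only [wp, hinv, if_pos hneg] at hw
    rw [if_pos] at hw
    · exact absurd hw (by simp)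
    · exact case3_10 b _ (by omega)
  · simp only [wp, hinv, if_neg hneg] at hw
    by_cases h3 : case3G [AC.upper (0:Fin 2) .le b, AC.upper 1 .le 0] 0 1
        ((c : ℤ) - (-p) + 0).toNat
    · rw [if_pos h3] at hw; exact absurd hw (by simp)
    · rw [if_neg h3] at hw
      rw [case3_iff] at h3
      cases hw
      constructor <;> omega

private lemma step_lemma {L : Type} (B : BCA L) (lt : L) (n : ℕ)
    (ls : ℕ → L) (cs : ℕ → ℕ)
    (h : PropSeq (mkAB B lt) 0 n (fun i => Sum.inl (ls i)) (fun _ => Ctx.dUpper 0 1) cs)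
    (k : ℕ) (hk : k < n) :
    ∃ p : ℤ, (ls k, p, ls (k + 1)) ∈ B.trans ∧
      (cs (k + 1) : ℤ) = (cs k : ℤ) + p ∧ cs (k + 1) ≤ B.bound := by
  obtain ⟨t, ht, hsrc, htgt, heq⟩ := h k (Nat.zero_le _) hk
  simp only [mkAB, List.mem_append, List.mem_map, List.mem_cons,
    List.not_mem_nil, or_false] at ht
  rcases ht with ⟨d, hd, rfl⟩ | rfl | rfl | rfl
  · simp only [Sum.inl.injEq] at hsrc htgt
    refine ⟨d.2.1, ?_, ?_⟩
    · rw [← htgt, ← hsrc]; exact hd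
    · exact key B.bound d.2.1 (cs k) (cs (k+1)) heq
  · exact absurd htgt (by simp)
  · exact absurd hsrc (by simp)
  · exact absurd hsrc (by simp)

end Aux

/-- Lemma `timed-to-counter`. Every propagation sequence
`(ℓ₀, x−y ≤ 0) → ⋯ → (ℓ_n, x−y ≤ c_n)` in `A_B` through states of `L` yields a
run `(ℓ₀, 0) → ⋯ → (ℓ_n, c_n)` of `B`. -/
theorem stmt18 {L : Type} [Fintype L] (B : BCA L) (lt : L) (n : ℕ)
    (ls : ℕ → L) (cs : ℕ → ℕ)
    (h : PropSeq (mkAB B lt) 0 n (fun i => Sum.inl (ls i)) (fun _ => Ctx.dUpper 0 1) cs)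
    (h0 : ls 0 = B.init) (hc0 : cs 0 = 0) :
    B.IsRun n ls (fun i => (cs i : ℤ)) := by
  have step := step_lemma B lt n ls cs h
  refine ⟨h0, by simp [hc0], ?_, ?_⟩
  · intro i hi
    refine ⟨Int.ofNat_nonneg _, ?_⟩
    cases i with
    | zero => simp [hc0]
    | succ j =>
        obtain ⟨p, _, _, hb⟩ := step j (by omega)
        show (cs (j+1) : ℤ) ≤ (B.bound : ℤ)
        exact_mod_cast hb
  · intro i hi
    obtain ⟨p, hp, he, _⟩ := step i hi
    exact ⟨p, hp, he⟩
end
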